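/- arXiv:2003.04280 — 8 statements merged into one kernel-verified Lean document; each statement's English description precedes it below -/
import Mathlib

section
/- For any non-empty finite set S ⊂ ℝ and any function w : S → ℝ_{>0}, there exists a binary search tree T with V(T) = S such that for each y ∈ S, d_T(y) ≤ log₂(W / w(y)), where W := Σ_{y∈S} w(y). -/
attribute [local instance] Classical.propDecidable

/-- A binary tree with real-number node values. -/
inductive BT : Type
  | leaf : BT
  | node : BT → ℝ → BT → BT

namespace BT

/-- The set of values stored in the tree. -/
noncomputable def nodes : BT → Finset ℝ
  | .leaf => ∅
  | .node l v r => insert v (nodes l ∪ nodes r)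

/-- The signature of `x` in the tree: the bit string of the search path for `x`
(`false` = step to a left child, `true` = step to a right child). For a node `x` of the
tree, its length is the depth `d_T(x)`. -/
noncomputable def sig : BT → ℝ → List Bool
  | .leaf, _ => []
  | .node l v r, x =>
    if x < v then false :: sig l x
    else if v < x then true :: sig r x
    else []

/-- The number of nodes of the tree. -/
def size : BT → ℕ
  | .leaf => 0
  | .node l _ r => size l + size r + 1

/-- The binary-search-tree property: all values in a left subtree are smaller than the
value at the node, all values in a right subtree are larger. -/
def isBST : BT → Prop
  | .leaf => True
  | .node l v r => (∀ x ∈ nodes l, x < v) ∧ (∀ x ∈ nodes r, v < x) ∧ isBST l ∧ isBST r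

/-- The height of the tree: the maximum depth of a node (0 for the empty tree). -/
noncomputable def height (t : BT) : ℕ := (nodes t).sup fun x => (sig t x).length

/-- The subtree rooted at the node holding the value `x` (a leaf if `x` is absent). -/
noncomputable def subtreeAt : BT → ℝ → BT
  | .leaf, _ => .leaf
  | .node l v r, x =>
    if x < v then subtreeAt l x
    else if v < x then subtreeAt r x
    else .node l v r

end BT

lemma biased_bst_aux : ∀ (n : ℕ) (S : Finset ℝ) (w : ℝ → ℝ) (B : ℝ), S.card ≤ n →
    (∀ y ∈ S, 0 < w y) → (∑ z ∈ S, w z) ≤ B →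
    ∃ t : BT, t.isBST ∧ t.nodes = S ∧
      ∀ y ∈ S, (2:ℝ) ^ (t.sig y).length * w y ≤ B := by
  intro n
  induction n with
  | zero =>
    intro S w B hcard _ _
    have hSe : S = ∅ := Finset.card_eq_zero.mp (Nat.le_zero.mp hcard)
    subst hSe
    exact ⟨.leaf, trivial, rfl, by simp⟩
  | succ n ih =>
    intro S w B hcard hw hB
    by_cases hSe : S = ∅
    · subst hSe
      exact ⟨.leaf, trivial, rfl, by simp⟩
    have hSne : S.Nonempty := Finset.nonempty_iff_ne_empty.mpr hSe
    set W := ∑ z ∈ S, w z with hWdef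
    have hW : 0 < W := Finset.sum_pos hw hSne
    -- choose the root x
    set P := S.filter (fun x => W/2 ≤ ∑ z ∈ S.filter (· ≤ x), w z) with hPdef
    have hPne : P.Nonempty := by
      refine ⟨S.max' hSne, Finset.mem_filter.mpr ⟨S.max'_mem hSne, ?_⟩⟩
      have : S.filter (· ≤ S.max' hSne) = S := by
        apply Finset.filter_true_of_mem
        intro z hz; exact S.le_max' z hz
      rw [this]; linarith
    set x := P.min' hPne with hxdef
    have hxP : x ∈ P := P.min'_mem hPne
    have hxS : x ∈ S := (Finset.mem_filter.mp hxP).1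
    have hxsum : W/2 ≤ ∑ z ∈ S.filter (· ≤ x), w z := (Finset.mem_filter.mp hxP).2
    set L := S.filter (· < x) with hLdef
    set R := S.filter (x < ·) with hRdef
    -- left weight bound
    have hLsum : ∑ z ∈ L, w z ≤ W/2 := by
      by_cases hLe : L = ∅
      · rw [hLe]; simp; linarith
      have hLne : L.Nonempty := Finset.nonempty_iff_ne_empty.mpr hLe
      set y := L.max' hLne with hydef
      have hyL : y ∈ L := L.max'_mem hLne
      have hyS : y ∈ S := (Finset.mem_filter.mp hyL).1
      have hyx : y < x := (Finset.mem_filter.mp hyL).2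
      have hLeq : L = S.filter (· ≤ y) := by
        ext z
        simp only [hLdef, Finset.mem_filter]
        constructor
        · rintro ⟨hzS, hzx⟩
          exact ⟨hzS, L.le_max' z (Finset.mem_filter.mpr ⟨hzS, hzx⟩)⟩
        · rintro ⟨hzS, hzy⟩
          exact ⟨hzS, lt_of_le_of_lt hzy hyx⟩
      have hyP : y ∉ P := by
        intro hyP
        exact absurd (P.min'_le y hyP) (not_le.mpr hyx)
      have : ¬ (W/2 ≤ ∑ z ∈ S.filter (· ≤ y), w z) := by
        intro h
        exact hyP (Finset.mem_filter.mpr ⟨hyS, h⟩)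
      rw [hLeq]
      linarith [not_le.mp this]
    -- right weight bound
    have hsplit : ∑ z ∈ S.filter (· ≤ x), w z + ∑ z ∈ S.filter (fun z => ¬ z ≤ x), w z = W := by
      rw [hWdef]; exact Finset.sum_filter_add_sum_filter_not S _ w
    have hReq : R = S.filter (fun z => ¬ z ≤ x) := by
      ext z; simp [hRdef, Finset.mem_filter, not_le]
    have hRsum : ∑ z ∈ R, w z ≤ W/2 := by
      rw [hReq]; linarith
    -- cardinalities
    have hLcard : L.card ≤ n := by
      have hsub : L ⊆ S.erase x := by
        intro z hz
        rcases Finset.mem_filter.mp hz with ⟨hzS, hzx⟩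
        exact Finset.mem_erase.mpr ⟨ne_of_lt hzx, hzS⟩
      have := Finset.card_le_card hsub
      rw [Finset.card_erase_of_mem hxS] at this
      omega
    have hRcard : R.card ≤ n := by
      have hsub : R ⊆ S.erase x := by
        intro z hz
        rcases Finset.mem_filter.mp hz with ⟨hzS, hzx⟩
        exact Finset.mem_erase.mpr ⟨ne_of_gt hzx, hzS⟩
      have := Finset.card_le_card hsub
      rw [Finset.card_erase_of_mem hxS] at this
      omega
    have hwL : ∀ y ∈ L, 0 < w y := fun y hy => hw y (Finset.mem_filter.mp hy).1
    have hwR : ∀ y ∈ R, 0 < w y := fun y hy => hw y (Finset.mem_filter.mp hy).1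
    obtain ⟨tL, hbL, hnL, hdL⟩ := ih L w (B/2) hLcard hwL (by linarith)
    obtain ⟨tR, hbR, hnR, hdR⟩ := ih R w (B/2) hRcard hwR (by linarith)
    refine ⟨.node tL x tR, ?_, ?_, ?_⟩
    · refine ⟨?_, ?_, hbL, hbR⟩
      · intro z hz; rw [hnL] at hz; exact (Finset.mem_filter.mp hz).2
      · intro z hz; rw [hnR] at hz; exact (Finset.mem_filter.mp hz).2
    · show insert x (tL.nodes ∪ tR.nodes) = S
      rw [hnL, hnR]
      rw [hLdef, hRdef]
      ext z
      simp only [Finset.mem_insert, Finset.mem_union, Finset.mem_filter]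
      constructor
      · rintro (rfl | ⟨h, _⟩ | ⟨h, _⟩) <;> first | exact hxS | exact h
      · intro hzS
        rcases lt_trichotomy z x with h | h | h
        · exact Or.inr (Or.inl ⟨hzS, h⟩)
        · exact Or.inl h
        · exact Or.inr (Or.inr ⟨hzS, h⟩)
    · intro y hyS
      rcases lt_trichotomy y x with h | h | h
      · have hsig : (BT.node tL x tR).sig y = false :: tL.sig y := by
          simp [BT.sig, h]
        rw [hsig]
        have hb := hdL y (Finset.mem_filter.mpr ⟨hyS, h⟩)
        simp only [List.length_cons, pow_succ]
        nlinarith [pow_pos (by norm_num : (0:ℝ) < 2) (tL.sig y).length, hw y hyS]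
      · have hsig : (BT.node tL x tR).sig y = [] := by
          simp [BT.sig, h]
        rw [hsig]
        simp only [List.length_nil, pow_zero, one_mul]
        have : w y ≤ W := by
          rw [hWdef]
          exact Finset.single_le_sum (fun z hz => le_of_lt (hw z hz)) hyS
        linarith
      · have hsig : (BT.node tL x tR).sig y = true :: tR.sig y := by
          simp [BT.sig, h, asymm h]
        rw [hsig]
        have hb := hdR y (Finset.mem_filter.mpr ⟨hyS, h⟩)
        simp only [List.length_cons, pow_succ]
        nlinarith [pow_pos (by norm_num : (0:ℝ) < 2) (tR.sig y).length, hw y hyS]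

/-- biased binary search trees: for any non-empty finite `S ⊂ ℝ` and
positive weights `w` on `S`, there is a binary search tree on `S` in which every `y ∈ S`
has depth at most `log₂(W / w(y))`, where `W = Σ_{y ∈ S} w(y)`. -/
theorem biased_bst (S : Finset ℝ) (hS : S.Nonempty) (w : ℝ → ℝ)
    (hw : ∀ y ∈ S, 0 < w y) :
    ∃ t : BT, t.isBST ∧ t.nodes = S ∧
      ∀ y ∈ S, ((t.sig y).length : ℝ) ≤ Real.logb 2 ((∑ z ∈ S, w z) / w y) := by
  obtain ⟨t, hb, hn, hd⟩ := biased_bst_aux S.card S w (∑ z ∈ S, w z) le_rfl hw le_rfl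
  refine ⟨t, hb, hn, fun y hy => ?_⟩
  have hwy := hw y hy
  have h1 : (2:ℝ) ^ (t.sig y).length ≤ (∑ z ∈ S, w z) / w y :=
    (le_div_iff₀ hwy).mpr (hd y hy)
  have h2 : ((t.sig y).length : ℝ) = Real.logb 2 ((2:ℝ) ^ (t.sig y).length) := by
    rw [Real.logb_pow, Real.logb_self_eq_one (by norm_num : (1:ℝ) < 2)]
    ring
  rw [h2]
  exact Real.logb_le_logb_of_le (by norm_num) (pow_pos (by norm_num) _) h1
end

section
/- Let T be a binary search tree and let x, y be nodes of T with x < y that are consecutive in the sorted order of V(T) (there is no node z of T with x < z < y). Then: (1) if y has no left child, σ_T(x) is obtained from σ_T(y) by removing all trailing 0 bits and then removing the final 1 bit; (2) if y has a left child, σ_T(x) is obtained from σ_T(y) by appending a 0 bit followed by exactly d_T(x) − d_T(y) − 1 bits equal to 1. -/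
attribute [local instance] Classical.propDecidable

namespace BT

/-- The left subtree of the root (a leaf for the empty tree). -/
def leftOf : BT → BT
  | .leaf => .leaf
  | .node l _ _ => l

end BT

namespace BT

lemma mem_nodes_node {l r : BT} {v x : ℝ} :
    x ∈ (BT.node l v r).nodes ↔ x = v ∨ x ∈ l.nodes ∨ x ∈ r.nodes := by
  simp [nodes]

lemma nodes_nonempty (t : BT) (h : t ≠ .leaf) : ∃ z, z ∈ t.nodes := by
  cases t with
  | leaf => exact absurd rfl h
  | node l v r => exact ⟨v, by simp [nodes]⟩

lemma sig_min : ∀ (t : BT), t.isBST → ∀ y ∈ t.nodes, (∀ z ∈ t.nodes, y ≤ z) →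
    ∃ s, t.sig y = List.replicate s false
  | .leaf, _, y, hy, _ => by simp [nodes] at hy
  | .node l v r, hbst, y, hy, hmin => by
    obtain ⟨hl, hr, hbl, hbr⟩ := hbst
    rcases mem_nodes_node.1 hy with h | h | h
    · exact ⟨0, by simp [sig, h]⟩
    · have hyv : y < v := hl y h
      obtain ⟨s, hs⟩ := sig_min l hbl y h
        (fun z hz => hmin z (mem_nodes_node.2 (Or.inr (Or.inl hz))))
      exact ⟨s + 1, by simp [sig, hyv, hs, List.replicate_succ]⟩
    · exact absurd (hmin v (mem_nodes_node.2 (Or.inl rfl))) (not_le.2 (hr y h))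

lemma sig_max : ∀ (t : BT), t.isBST → ∀ x ∈ t.nodes, (∀ z ∈ t.nodes, z ≤ x) →
    ∃ s, t.sig x = List.replicate s true
  | .leaf, _, x, hx, _ => by simp [nodes] at hx
  | .node l v r, hbst, x, hx, hmax => by
    obtain ⟨hl, hr, hbl, hbr⟩ := hbst
    rcases mem_nodes_node.1 hx with h | h | h
    · exact ⟨0, by simp [sig, h]⟩
    · exact absurd (hmax v (mem_nodes_node.2 (Or.inl rfl))) (not_le.2 (hl x h))
    · have hvx : v < x := hr x h
      obtain ⟨s, hs⟩ := sig_max r hbr x h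
        (fun z hz => hmax z (mem_nodes_node.2 (Or.inr (Or.inr hz))))
      exact ⟨s + 1, by simp [sig, hvx, not_lt.2 hvx.le, hs, List.replicate_succ]⟩

lemma leftOf_subtree : ∀ (t : BT), t.isBST → ∀ y ∈ t.nodes,
    ∀ z ∈ ((t.subtreeAt y).leftOf).nodes, z ∈ t.nodes ∧ z < y
  | .leaf, _, y, hy, _, _ => by simp [nodes] at hy
  | .node l v r, hbst, y, hy, z, hz => by
    obtain ⟨hl, hr, hbl, hbr⟩ := hbst
    rcases lt_trichotomy y v with h | h | h
    · have hy' : y ∈ l.nodes := by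
        rcases mem_nodes_node.1 hy with h' | h' | h'
        · exact absurd h' (ne_of_lt h)
        · exact h'
        · exact absurd (hr y h') (not_lt.2 h.le)
      rw [show (BT.node l v r).subtreeAt y = l.subtreeAt y by
        simp [subtreeAt, h]] at hz
      obtain ⟨h1, h2⟩ := leftOf_subtree l hbl y hy' z hz
      exact ⟨mem_nodes_node.2 (Or.inr (Or.inl h1)), h2⟩
    · subst h
      rw [show (BT.node l y r).subtreeAt y = BT.node l y r by
        simp [subtreeAt]] at hz
      simp only [leftOf] at hz
      exact ⟨mem_nodes_node.2 (Or.inr (Or.inl hz)), hl z hz⟩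
    · have hy' : y ∈ r.nodes := by
        rcases mem_nodes_node.1 hy with h' | h' | h'
        · exact absurd h'.symm (ne_of_lt h)
        · exact absurd (hl y h') (not_lt.2 h.le)
        · exact h'
      rw [show (BT.node l v r).subtreeAt y = r.subtreeAt y by
        simp [subtreeAt, h, not_lt.2 h.le]] at hz
      obtain ⟨h1, h2⟩ := leftOf_subtree r hbr y hy' z hz
      exact ⟨mem_nodes_node.2 (Or.inr (Or.inr h1)), h2⟩

end BT

/-- predecessor encoding: if `x < y` are consecutive nodes of a binary
search tree `T`, then (1) if `y` has no left child, `σ_T(x)` is obtained from `σ_T(y)`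
by removing all trailing `0`s and the final `1` (i.e. `σ_T(y) = σ_T(x) ++ 1 ++ 0^s`);
(2) if `y` has a left child, `σ_T(x)` is obtained from `σ_T(y)` by appending a `0`
followed by exactly `d_T(x) − d_T(y) − 1` bits `1`. -/
theorem predecessor_encoding (t : BT) (ht : t.isBST)
    (x y : ℝ) (hx : x ∈ t.nodes) (hy : y ∈ t.nodes) (hxy : x < y)
    (hcons : ∀ z ∈ t.nodes, ¬ (x < z ∧ z < y)) :
    ((t.subtreeAt y).leftOf = .leaf →
      ∃ s : ℕ, t.sig y = t.sig x ++ true :: List.replicate s false) ∧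
    ((t.subtreeAt y).leftOf ≠ .leaf →
      t.sig x = t.sig y ++ false ::
        List.replicate ((t.sig x).length - (t.sig y).length - 1) true) := by
  induction t with
  | leaf => simp [BT.nodes] at hx
  | node l v r ihl ihr =>
    obtain ⟨hl, hr, hbl, hbr⟩ := ht
    rcases lt_trichotomy y v with hyv | hyv | hyv
    · -- both x and y in left subtree
      have hxv : x < v := hxy.trans hyv
      have hx' : x ∈ l.nodes := by
        rcases BT.mem_nodes_node.1 hx with h | h | h
        · exact absurd h (ne_of_lt hxv)
        · exact h
        · exact absurd (hr x h) (not_lt.2 hxv.le)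
      have hy' : y ∈ l.nodes := by
        rcases BT.mem_nodes_node.1 hy with h | h | h
        · exact absurd h (ne_of_lt hyv)
        · exact h
        · exact absurd (hr y h) (not_lt.2 hyv.le)
      have hc' : ∀ z ∈ l.nodes, ¬ (x < z ∧ z < y) := fun z hz =>
        hcons z (BT.mem_nodes_node.2 (Or.inr (Or.inl hz)))
      obtain ⟨IH1, IH2⟩ := ihl hbl hx' hy' hc'
      constructor
      · intro hleaf
        have hsub : (BT.node l v r).subtreeAt y = l.subtreeAt y := by
          simp [BT.subtreeAt, hyv]
        rw [hsub] at hleaf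
        obtain ⟨s, hs⟩ := IH1 hleaf
        exact ⟨s, by simp [BT.sig, hxv, hyv, hs]⟩
      · intro hne
        have hsub : (BT.node l v r).subtreeAt y = l.subtreeAt y := by
          simp [BT.subtreeAt, hyv]
        rw [hsub] at hne
        have := IH2 hne
        simp only [BT.sig, if_pos hxv, if_pos hyv, List.length_cons,
          Nat.succ_sub_succ]
        rw [List.cons_append]
        exact congrArg _ this
    · -- y = v : x is max of left subtree
      subst hyv
      have hxv : x < y := hxy
      have hx' : x ∈ l.nodes := by
        rcases BT.mem_nodes_node.1 hx with h | h | h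
        · exact absurd h (ne_of_lt hxv)
        · exact h
        · exact absurd (hr x h) (not_lt.2 hxv.le)
      have hsub : (BT.node l y r).subtreeAt y = BT.node l y r := by
        simp [BT.subtreeAt]
      have hsigy : (BT.node l y r).sig y = [] := by simp [BT.sig]
      constructor
      · intro hleaf
        rw [hsub] at hleaf
        simp only [BT.leftOf] at hleaf
        rw [hleaf] at hx'
        simp [BT.nodes] at hx'
      · intro _
        have hmax : ∀ z ∈ l.nodes, z ≤ x := by
          intro z hz
          by_contra hzx
          exact hcons z (BT.mem_nodes_node.2 (Or.inr (Or.inl hz)))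
            ⟨not_le.1 hzx, hl z hz⟩
        obtain ⟨s, hs⟩ := BT.sig_max l hbl x hx' hmax
        have hsigx : (BT.node l y r).sig x = false :: l.sig x := by
          simp [BT.sig, hxv]
        rw [hsigx, hsigy, hs]
        simp
    · -- v < y
      rcases lt_trichotomy x v with hxv | hxv | hxv
      · -- x < v < y : contradicts consecutiveness
        exact absurd ⟨hxv, hyv⟩ (hcons v (BT.mem_nodes_node.2 (Or.inl rfl)))
      · -- x = v : y is min of right subtree
        subst hxv
        have hy' : y ∈ r.nodes := by
          rcases BT.mem_nodes_node.1 hy with h | h | h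
          · exact absurd h.symm (ne_of_lt hyv)
          · exact absurd (hl y h) (not_lt.2 hyv.le)
          · exact h
        have hsub : (BT.node l x r).subtreeAt y = r.subtreeAt y := by
          simp [BT.subtreeAt, hyv, not_lt.2 hyv.le]
        have hsigx : (BT.node l x r).sig x = [] := by simp [BT.sig]
        constructor
        · intro _
          have hmin : ∀ z ∈ r.nodes, y ≤ z := by
            intro z hz
            by_contra hzy
            exact hcons z (BT.mem_nodes_node.2 (Or.inr (Or.inr hz)))
              ⟨hr z hz, not_le.1 hzy⟩
          obtain ⟨s, hs⟩ := BT.sig_min r hbr y hy' hmin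
          refine ⟨s, ?_⟩
          rw [hsigx]
          simp [BT.sig, hyv, not_lt.2 hyv.le, hs]
        · intro hne
          rw [hsub] at hne
          exfalso
          obtain ⟨z, hz⟩ := BT.nodes_nonempty _ hne
          obtain ⟨hz1, hz2⟩ := BT.leftOf_subtree r hbr y hy' z hz
          exact hcons z (BT.mem_nodes_node.2 (Or.inr (Or.inr hz1)))
            ⟨hr z hz1, hz2⟩
      · -- v < x < y : both in right subtree
        have hx' : x ∈ r.nodes := by
          rcases BT.mem_nodes_node.1 hx with h | h | h
          · exact absurd h.symm (ne_of_lt hxv)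
          · exact absurd (hl x h) (not_lt.2 hxv.le)
          · exact h
        have hy' : y ∈ r.nodes := by
          rcases BT.mem_nodes_node.1 hy with h | h | h
          · exact absurd h.symm (ne_of_lt hyv)
          · exact absurd (hl y h) (not_lt.2 hyv.le)
          · exact h
        have hc' : ∀ z ∈ r.nodes, ¬ (x < z ∧ z < y) := fun z hz =>
          hcons z (BT.mem_nodes_node.2 (Or.inr (Or.inr hz)))
        obtain ⟨IH1, IH2⟩ := ihr hbr hx' hy' hc'
        have hsub : (BT.node l v r).subtreeAt y = r.subtreeAt y := by
          simp [BT.subtreeAt, hyv, not_lt.2 hyv.le]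
        constructor
        · intro hleaf
          rw [hsub] at hleaf
          obtain ⟨s, hs⟩ := IH1 hleaf
          exact ⟨s, by simp [BT.sig, hxv, hyv, not_lt.2 hxv.le, not_lt.2 hyv.le, hs]⟩
        · intro hne
          rw [hsub] at hne
          have := IH2 hne
          simp only [BT.sig, if_neg (not_lt.2 hxv.le), if_pos hxv,
            if_neg (not_lt.2 hyv.le), if_pos hyv, List.length_cons,
            Nat.succ_sub_succ]
          rw [List.cons_append]
          exact congrArg _ this
end

section
/- There exist a constant C > 0 and a function A : {0,1}* × {0,1}* → {−1, 0, 1, ⊥} such that for every integer h ≥ 1 and every weight function w : {1,…,h} → ℝ_{>0}, there is a prefix-free code α : {1,…,h} → {0,1}* satisfying: (1) for each i ∈ {1,…,h}, |α(i)| ≤ log₂ W − log₂ w(i) + C·(log₂(log₂ h + 2) + 1), where W := Σ_{j=1}^h w(j); and (2) for all i, j ∈ {1,…,h}, A(α(i), α(j)) equals 0 if j = i, equals 1 if j = i + 1, equals −1 if j = i − 1, and equals ⊥ otherwise. -/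
/-!
Shannon–Fano–Elias coding, with each codeword prefixed by where it branches off from its two
neighbours. Item `i` gets length `ℓ i = min ⌈log₂ (W / w i)⌉ ⌈log₂ h⌉ + 2`; Kraft's sum of
`2 ^ (1 - ℓ i)` stays below `1`, so `[0, 1)` splits into consecutive intervals of these lengths,
and the codeword `c i` is a dyadic interval of length `2 ^ (-ℓ i)` inside the `i`-th one. Hence the
`c i` are prefix-free and lexicographically increasing. The label of `i` is `c i` preceded by
self-delimiting codes of `lcp (c (i - 1)) (c i)` and `lcp (c i) (c (i + 1))`; these are at most
`ℓ i = O(log h)`, so they cost `O(log log h)` bits.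

The decoder declares `j = i + 1` when `c i` and `c j` branch at the position stored both as the
successor split of `i` and as the predecessor split of `j`.
-/

namespace RowCode

def bval (l : List Bool) : ℕ := l.foldl (fun a b => 2 * a + if b then 1 else 0) 0

lemma bval_append_singleton (l : List Bool) (b : Bool) :
    bval (l ++ [b]) = 2 * bval l + if b then 1 else 0 := by
  simp [bval, List.foldl_append]

/-- The last `ℓ` binary digits of `n`, most significant first. -/
def toBits : ℕ → ℕ → List Bool
  | 0, _ => []
  | ℓ + 1, n => toBits ℓ (n / 2) ++ [decide (n % 2 = 1)]

@[simp] lemma length_toBits (ℓ n : ℕ) : (toBits ℓ n).length = ℓ := by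
  induction ℓ generalizing n with
  | zero => rfl
  | succ ℓ ih => simp [toBits, ih]

lemma bval_toBits (ℓ n : ℕ) : bval (toBits ℓ n) = n % 2 ^ ℓ := by
  induction ℓ generalizing n with
  | zero => simp [toBits, bval, Nat.mod_one]
  | succ ℓ ih =>
    have hbit : (if decide (n % 2 = 1) then 1 else 0) = n % 2 := by
      rcases Nat.mod_two_eq_zero_or_one n with h | h <;> simp [h]
    rw [toBits, bval_append_singleton, ih, hbit, pow_succ', Nat.mod_mul]
    ring

lemma toBits_add (a b n : ℕ) : toBits (a + b) n = toBits a (n / 2 ^ b) ++ toBits b n := by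
  induction b generalizing n with
  | zero => simp [toBits]
  | succ b ih =>
    rw [← add_assoc, toBits, ih, toBits, List.append_assoc, Nat.div_div_eq_div_mul, pow_succ']

lemma take_toBits {k ℓ : ℕ} (h : k ≤ ℓ) (n : ℕ) :
    (toBits ℓ n).take k = toBits k (n / 2 ^ (ℓ - k)) := by
  obtain ⟨d, rfl⟩ := Nat.exists_eq_add_of_le h
  rw [toBits_add, List.take_left' (length_toBits _ _), Nat.add_sub_cancel_left]

lemma bval_take_toBits {k ℓ n : ℕ} (hk : k ≤ ℓ) (hn : n < 2 ^ ℓ) :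
    bval ((toBits ℓ n).take k) = n / 2 ^ (ℓ - k) := by
  rw [take_toBits hk, bval_toBits, Nat.mod_eq_of_lt]
  rw [Nat.div_lt_iff_lt_mul (by positivity), ← pow_add, Nat.add_sub_cancel' hk]
  exact hn

section lcp

variable {α : Type*} [DecidableEq α]

def lcpLen : List α → List α → ℕ
  | a :: u, b :: v => if a = b then lcpLen u v + 1 else 0
  | _, _ => 0

lemma take_lcpLen (u v : List α) : u.take (lcpLen u v) = v.take (lcpLen u v) := by
  induction u generalizing v with
  | nil => cases v <;> simp [lcpLen]
  | cons a u ih =>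
    cases v with
    | nil => simp [lcpLen]
    | cons b v => by_cases hab : a = b <;> simp [lcpLen, hab, ih]

lemma lcpLen_comm (u v : List α) : lcpLen u v = lcpLen v u := by
  induction u generalizing v with
  | nil => cases v <;> simp [lcpLen]
  | cons a u ih =>
    cases v with
    | nil => simp [lcpLen]
    | cons b v => by_cases hab : a = b <;> simp [lcpLen, hab, eq_comm, ih]

lemma lcpLen_le_length_left (u v : List α) : lcpLen u v ≤ u.length := by
  induction u generalizing v with
  | nil => simp [lcpLen]
  | cons a u ih =>
    cases v with
    | nil => simp [lcpLen]
    | cons b v => by_cases hab : a = b <;> simp [lcpLen, hab, ih v]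

lemma lcpLen_le_length_right (u v : List α) : lcpLen u v ≤ v.length :=
  lcpLen_comm u v ▸ lcpLen_le_length_left v u

lemma exists_getElem?_lcpLen_ne {u v : List α} (hu : ¬ u <+: v) (hv : ¬ v <+: u) :
    ∃ x y : α, u[lcpLen u v]? = some x ∧ v[lcpLen u v]? = some y ∧ x ≠ y := by
  induction u generalizing v with
  | nil => exact absurd List.nil_prefix hu
  | cons a u ih =>
    cases v with
    | nil => exact absurd List.nil_prefix hv
    | cons b v =>
      by_cases hab : a = b
      · subst hab
        simp only [List.cons_prefix_cons, true_and] at hu hv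
        obtain ⟨x, y, hx, hy, hxy⟩ := ih hu hv
        exact ⟨x, y, by simpa [lcpLen] using hx, by simpa [lcpLen] using hy, hxy⟩
      · exact ⟨a, b, by simp [lcpLen, hab], by simp [lcpLen, hab], hab⟩

end lcp

/-- `u` lies lexicographically below `v`, neither is a prefix of the other, and they first differ
at position `m`. -/
def SplitsAt (m : ℕ) (u v : List Bool) : Prop :=
  u.take m = v.take m ∧ u[m]? = some false ∧ v[m]? = some true

instance (m : ℕ) (u v : List Bool) : Decidable (SplitsAt m u v) :=
  inferInstanceAs (Decidable (_ ∧ _ ∧ _))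

lemma SplitsAt.lcpLen_eq {m : ℕ} {u v : List Bool} (h : SplitsAt m u v) : lcpLen u v = m := by
  induction m generalizing u v with
  | zero =>
    obtain ⟨-, hu, hv⟩ := h
    cases u <;> cases v <;> simp_all [lcpLen]
  | succ m ih =>
    obtain ⟨ht, hu, hv⟩ := h
    cases u with
    | nil => simp at hu
    | cons a u =>
      cases v with
      | nil => simp at hv
      | cons b v =>
        simp only [List.take_succ_cons, List.cons.injEq] at ht
        simp only [List.getElem?_cons_succ] at hu hv
        simp [lcpLen, ht.1, ih ⟨ht.2, hu, hv⟩]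

lemma SplitsAt.not_splitsAt_symm {m m' : ℕ} {u v : List Bool} (h : SplitsAt m u v) :
    ¬ SplitsAt m' v u := by
  intro h'
  have hm : m' = m := by rw [← h.lcpLen_eq, ← h'.lcpLen_eq, lcpLen_comm]
  have hu := h'.2.2
  rw [hm, h.2.1] at hu
  simp at hu

lemma SplitsAt.not_splitsAt_self {m : ℕ} {u : List Bool} : ¬ SplitsAt m u u :=
  fun h => h.not_splitsAt_symm h

lemma SplitsAt.not_prefix {m : ℕ} {u v : List Bool} (h : SplitsAt m u v) : ¬ u <+: v := by
  intro hp
  obtain ⟨hm, hu⟩ := List.getElem?_eq_some_iff.mp h.2.1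
  have := List.prefix_iff_getElem?.mp hp m hm
  simp [hu, h.2.2] at this

lemma SplitsAt.not_prefix_symm {m : ℕ} {u v : List Bool} (h : SplitsAt m u v) : ¬ v <+: u := by
  intro hp
  obtain ⟨hm, hv⟩ := List.getElem?_eq_some_iff.mp h.2.2
  have := List.prefix_iff_getElem?.mp hp m hm
  simp [hv, h.2.1] at this

lemma splitsAt_lcpLen_of_not_splitsAt {u v : List Bool} (hu : ¬ u <+: v) (hv : ¬ v <+: u)
    (hvu : ∀ m, ¬ SplitsAt m v u) : SplitsAt (lcpLen u v) u v := by
  obtain ⟨x, y, hx, hy, hxy⟩ := exists_getElem?_lcpLen_ne hu hv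
  cases x <;> cases y
  · exact absurd rfl hxy
  · exact ⟨take_lcpLen u v, hx, hy⟩
  · exact absurd ⟨(take_lcpLen u v).symm, hy, hx⟩ (hvu _)
  · exact absurd rfl hxy

lemma toBits_prefix_bounds {ℓ ℓ' n n' : ℕ} (hn : n < 2 ^ ℓ) (hn' : n' < 2 ^ ℓ')
    (h : toBits ℓ n <+: toBits ℓ' n') :
    n * 2 ^ ℓ' ≤ n' * 2 ^ ℓ ∧ n' * 2 ^ ℓ < (n + 1) * 2 ^ ℓ' := by
  have hle : ℓ ≤ ℓ' := by simpa using h.length_le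
  obtain ⟨d, rfl⟩ := Nat.exists_eq_add_of_le hle
  have hq : n = n' / 2 ^ d := by
    have := congrArg bval (List.prefix_iff_eq_take.mp h)
    rwa [length_toBits, bval_toBits, Nat.mod_eq_of_lt hn, bval_take_toBits hle hn',
      Nat.add_sub_cancel_left] at this
  have h1 : n * 2 ^ d ≤ n' := hq ▸ Nat.div_mul_le_self n' (2 ^ d)
  have h2 : n' < (n + 1) * 2 ^ d := by
    rw [hq, add_mul, one_mul]; exact Nat.lt_div_mul_add (by positivity)
  rw [pow_add]
  constructor
  · calc n * (2 ^ ℓ * 2 ^ d) = n * 2 ^ d * 2 ^ ℓ := by ring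
      _ ≤ n' * 2 ^ ℓ := Nat.mul_le_mul_right _ h1
  · calc n' * 2 ^ ℓ < (n + 1) * 2 ^ d * 2 ^ ℓ := Nat.mul_lt_mul_of_pos_right h2 (by positivity)
      _ = (n + 1) * (2 ^ ℓ * 2 ^ d) := by ring

lemma toBits_lt_of_splitsAt {ℓ ℓ' n n' m : ℕ} (hn : n < 2 ^ ℓ) (hn' : n' < 2 ^ ℓ')
    (h : SplitsAt m (toBits ℓ n) (toBits ℓ' n')) : n * 2 ^ ℓ' < n' * 2 ^ ℓ := by
  obtain ⟨ht, hu, hv⟩ := h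
  have hm : m + 1 ≤ ℓ := by simpa using (List.getElem?_eq_some_iff.mp hu).1
  have hm' : m + 1 ≤ ℓ' := by simpa using (List.getElem?_eq_some_iff.mp hv).1
  set P := bval ((toBits ℓ n).take m)
  have hq : n / 2 ^ (ℓ - (m + 1)) = 2 * P := by
    rw [← bval_take_toBits hm hn, List.take_add_one, hu]
    simp [bval_append_singleton, P]
  have hq' : n' / 2 ^ (ℓ' - (m + 1)) = 2 * P + 1 := by
    rw [← bval_take_toBits hm' hn', List.take_add_one, hv, ← ht]
    simp [bval_append_singleton, P]
  obtain ⟨d, rfl⟩ := Nat.exists_eq_add_of_le hm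
  obtain ⟨d', rfl⟩ := Nat.exists_eq_add_of_le hm'
  rw [Nat.add_sub_cancel_left] at hq hq'
  have h1 : n < (2 * P + 1) * 2 ^ d := by
    rw [← hq, add_mul, one_mul]; exact Nat.lt_div_mul_add (by positivity)
  have h2 : (2 * P + 1) * 2 ^ d' ≤ n' := hq' ▸ Nat.div_mul_le_self n' (2 ^ d')
  calc n * 2 ^ (m + 1 + d') < (2 * P + 1) * 2 ^ d * 2 ^ (m + 1 + d') :=
        Nat.mul_lt_mul_of_pos_right h1 (by positivity)
    _ = (2 * P + 1) * 2 ^ d' * 2 ^ (m + 1 + d) := by ring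
    _ ≤ n' * 2 ^ (m + 1 + d) := Nat.mul_le_mul_right _ h2

/-- `hlt` places the dyadic interval `[n, n + 1) / 2 ^ ℓ` left of `[n', n' + 1) / 2 ^ ℓ'`. -/
lemma splitsAt_lcpLen_toBits {ℓ ℓ' n n' : ℕ} (hn : n < 2 ^ ℓ) (hn' : n' < 2 ^ ℓ')
    (hlt : (n + 1) * 2 ^ ℓ' ≤ n' * 2 ^ ℓ) :
    SplitsAt (lcpLen (toBits ℓ n) (toBits ℓ' n')) (toBits ℓ n) (toBits ℓ' n') := by
  have hpos : 0 < 2 ^ ℓ' := by positivity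
  apply splitsAt_lcpLen_of_not_splitsAt
  · intro hp
    exact lt_irrefl _ ((toBits_prefix_bounds hn hn' hp).2.trans_le hlt)
  · intro hp
    have := (toBits_prefix_bounds hn' hn hp).1
    nlinarith
  · intro m hs
    have := toBits_lt_of_splitsAt hn' hn hs
    nlinarith

def encodeNat (t : ℕ) : List Bool := List.replicate t.size true ++ false :: toBits t.size t

def decodeNat (u : List Bool) : ℕ × List Bool :=
  let k := (u.takeWhile id).length
  let r := u.drop (k + 1)
  (bval (r.take k), r.drop k)

lemma length_encodeNat (t : ℕ) : (encodeNat t).length = 2 * t.size + 1 := by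
  simp [encodeNat]; ring

lemma decodeNat_encodeNat_append (t : ℕ) (r : List Bool) :
    decodeNat (encodeNat t ++ r) = (t, r) := by
  have hk : ((encodeNat t ++ r).takeWhile id).length = t.size := by
    simp [encodeNat]
  have hr : (encodeNat t ++ r).drop (t.size + 1) = toBits t.size t ++ r := by
    simp [encodeNat, List.drop_append]
  simp only [decodeNat, hk, hr, List.take_left' (length_toBits _ _),
    List.drop_left' (length_toBits _ _), bval_toBits, Nat.mod_eq_of_lt (Nat.lt_size_self t)]

lemma encodeNat_append_prefix_iff {a b : ℕ} {u v : List Bool} :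
    encodeNat a ++ u <+: encodeNat b ++ v ↔ a = b ∧ u <+: v := by
  constructor
  · rintro ⟨z, hz⟩
    have := congrArg decodeNat hz
    rw [List.append_assoc, decodeNat_encodeNat_append, decodeNat_encodeNat_append,
      Prod.mk.injEq] at this
    exact ⟨this.1, z, this.2⟩
  · rintro ⟨rfl, hp⟩
    exact List.prefix_append_right_inj _ |>.mpr hp

def IsSplitChain (h : ℕ) (c : ℕ → List Bool) : Prop :=
  ∀ i ∈ Finset.Icc 1 h, ∀ j ∈ Finset.Icc 1 h, i < j → SplitsAt (lcpLen (c i) (c j)) (c i) (c j)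

def label (c : ℕ → List Bool) (i : ℕ) : List Bool :=
  encodeNat (lcpLen (c (i - 1)) (c i)) ++ encodeNat (lcpLen (c i) (c (i + 1))) ++ c i

def decodeLabel (u : List Bool) : ℕ × ℕ × List Bool :=
  let (a, u₁) := decodeNat u
  let (b, r) := decodeNat u₁
  (a, b, r)

def adjacency (u v : List Bool) : Option ℤ :=
  if u = v then some 0 else
    let x := decodeLabel u
    let y := decodeLabel v
    if x.2.1 = y.1 ∧ SplitsAt x.2.1 x.2.2 y.2.2 then some 1
    else if y.2.1 = x.1 ∧ SplitsAt y.2.1 y.2.2 x.2.2 then some (-1) else none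

lemma decodeLabel_label (c : ℕ → List Bool) (i : ℕ) :
    decodeLabel (label c i) = (lcpLen (c (i - 1)) (c i), lcpLen (c i) (c (i + 1)), c i) := by
  simp [decodeLabel, label, List.append_assoc, decodeNat_encodeNat_append]

lemma length_label_le (c : ℕ → List Bool) (i : ℕ) :
    (label c i).length ≤ (c i).length + 4 * (c i).length.size + 2 := by
  have h₁ := Nat.size_le_size (lcpLen_le_length_right (c (i - 1)) (c i))
  have h₂ := Nat.size_le_size (lcpLen_le_length_left (c i) (c (i + 1)))
  simp only [label, List.length_append, length_encodeNat]
  omega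

namespace IsSplitChain

variable {h : ℕ} {c : ℕ → List Bool} {i j : ℕ}

lemma lt_of_splitsAt (hc : IsSplitChain h c) (hi : i ∈ Finset.Icc 1 h)
    (hj : j ∈ Finset.Icc 1 h) {m : ℕ} (hs : SplitsAt m (c i) (c j)) : i < j := by
  by_contra hji
  rcases (not_lt.mp hji).lt_or_eq with hji | rfl
  · exact hs.not_splitsAt_symm (hc j hj i hi hji)
  · exact SplitsAt.not_splitsAt_self hs

lemma not_prefix (hc : IsSplitChain h c) (hi : i ∈ Finset.Icc 1 h)
    (hj : j ∈ Finset.Icc 1 h) (hij : i ≠ j) : ¬ c i <+: c j := by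
  rcases hij.lt_or_gt with hij | hji
  · exact (hc i hi j hj hij).not_prefix
  · exact (hc j hj i hi hji).not_prefix_symm

lemma label_not_prefix (hc : IsSplitChain h c) (hi : i ∈ Finset.Icc 1 h)
    (hj : j ∈ Finset.Icc 1 h) (hij : i ≠ j) : ¬ label c i <+: label c j := by
  simp only [label, List.append_assoc, encodeNat_append_prefix_iff]
  exact fun hp => hc.not_prefix hi hj hij hp.2.2

/-- The stored split positions identify the successor: if `c i` splits from `c j` where it splits
from `c (i + 1)`, and `c j` splits from `c (j - 1)` there too, then `c (j - 1)` lies below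
`c (i + 1)`, forcing `j = i + 1`. -/
lemma splitsAt_lcpLen_succ_iff (hc : IsSplitChain h c) (hi : i ∈ Finset.Icc 1 h)
    (hj : j ∈ Finset.Icc 1 h) :
    (lcpLen (c i) (c (i + 1)) = lcpLen (c (j - 1)) (c j) ∧
      SplitsAt (lcpLen (c i) (c (i + 1))) (c i) (c j)) ↔ j = i + 1 := by
  obtain ⟨hi₁, hih⟩ := Finset.mem_Icc.mp hi
  obtain ⟨hj₁, hjh⟩ := Finset.mem_Icc.mp hj
  constructor
  · rintro ⟨heq, hs⟩
    have hij := hc.lt_of_splitsAt hi hj hs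
    by_contra hne
    have hi' : i + 1 ∈ Finset.Icc 1 h := Finset.mem_Icc.mpr (by omega)
    have hj' : j - 1 ∈ Finset.Icc 1 h := Finset.mem_Icc.mpr (by omega)
    have hsucc := hc i hi (i + 1) hi' (by omega)
    have hpred := hc (j - 1) hj' j hj (by omega)
    rw [← heq] at hpred
    have hcross : SplitsAt (lcpLen (c i) (c (i + 1))) (c (j - 1)) (c (i + 1)) :=
      ⟨by rw [hpred.1, ← hs.1, hsucc.1], hpred.2.1, hsucc.2.2⟩
    have := hc.lt_of_splitsAt hj' hi' hcross
    omega
  · rintro rfl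
    simp only [Nat.add_sub_cancel, true_and]
    exact hc i hi (i + 1) hj (by omega)

lemma adjacency_label (hc : IsSplitChain h c) (hi : i ∈ Finset.Icc 1 h)
    (hj : j ∈ Finset.Icc 1 h) :
    adjacency (label c i) (label c j) =
      if j = i then some 0 else if j = i + 1 then some 1
      else if i = j + 1 then some (-1) else none := by
  by_cases hji : j = i
  · simp [adjacency, hji]
  have hne : label c i ≠ label c j := fun he =>
    hc.label_not_prefix hi hj (Ne.symm hji) (he ▸ List.prefix_refl _)
  simp only [adjacency, if_neg hne, if_neg hji, decodeLabel_label,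
    hc.splitsAt_lcpLen_succ_iff hi hj, hc.splitsAt_lcpLen_succ_iff hj hi]

end IsSplitChain

lemma clog_two_lt_logb_add_one {n : ℕ} (hn : 1 ≤ n) :
    (Nat.clog 2 n : ℝ) < Real.logb 2 n + 1 := by
  have hceil := Nat.ceil_lt_add_one (Real.logb_nonneg one_lt_two (Nat.one_le_cast.mpr hn))
  have hclog := Real.natCeil_logb_natCast 2 n
  push_cast at hclog
  rwa [hclog] at hceil

lemma logb_clog_add_three_le {h : ℕ} (hh : 1 ≤ h) :
    Real.logb 2 (Nat.clog 2 h + 3) ≤ Real.logb 2 (Real.logb 2 h + 2) + 1 := by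
  have hlog : 0 ≤ Real.logb 2 h := Real.logb_nonneg one_lt_two (Nat.one_le_cast.mpr hh)
  have hclog := clog_two_lt_logb_add_one hh
  calc Real.logb 2 (Nat.clog 2 h + 3) ≤ Real.logb 2 (2 * (Real.logb 2 h + 2)) :=
        Real.logb_le_logb_of_le one_lt_two (by positivity) (by linarith)
    _ = Real.logb 2 (Real.logb 2 h + 2) + 1 := by
        rw [Real.logb_mul two_ne_zero (by positivity), Real.logb_self_eq_one one_lt_two,
          add_comm]

noncomputable section

def codeLength (h : ℕ) (w : ℕ → ℝ) (i : ℕ) : ℕ :=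
  min ⌈Real.logb 2 ((∑ j ∈ Finset.Icc 1 h, w j) / w i)⌉₊ (Nat.clog 2 h) + 2

def cumMass (h : ℕ) (w : ℕ → ℝ) (i : ℕ) : ℝ :=
  ∑ j ∈ Finset.Icc 1 i, 2 / 2 ^ codeLength h w j

/-- The codeword of `i` is the first dyadic interval of length `2 ^ (-codeLength h w i)` inside
`[cumMass h w (i - 1), cumMass h w i)`, which has twice that length. -/
def codeNum (h : ℕ) (w : ℕ → ℝ) (i : ℕ) : ℕ :=
  ⌈cumMass h w (i - 1) * 2 ^ codeLength h w i⌉₊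

def codeword (h : ℕ) (w : ℕ → ℝ) (i : ℕ) : List Bool :=
  toBits (codeLength h w i) (codeNum h w i)

end

section

variable {h : ℕ} {w : ℕ → ℝ} {i : ℕ}

lemma codeLength_le_clog (i : ℕ) : codeLength h w i ≤ Nat.clog 2 h + 2 := by
  unfold codeLength
  omega

lemma codeLength_lt (hw : ∀ i ∈ Finset.Icc 1 h, 0 < w i) (hi : i ∈ Finset.Icc 1 h) :
    (codeLength h w i : ℝ) <
      Real.logb 2 (∑ j ∈ Finset.Icc 1 h, w j) - Real.logb 2 (w i) + 3 := by
  have hwi := hw i hi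
  have hW : w i ≤ ∑ j ∈ Finset.Icc 1 h, w j :=
    Finset.single_le_sum (fun j hj => (hw j hj).le) hi
  have hlog : 0 ≤ Real.logb 2 ((∑ j ∈ Finset.Icc 1 h, w j) / w i) :=
    Real.logb_nonneg one_lt_two ((one_le_div hwi).mpr hW)
  have hceil := Nat.ceil_lt_add_one hlog
  rw [Real.logb_div (by linarith) hwi.ne'] at hceil
  have : (codeLength h w i : ℝ) ≤ ⌈Real.logb 2 ((∑ j ∈ Finset.Icc 1 h, w j) / w i)⌉₊ + 2 := by
    unfold codeLength
    exact_mod_cast Nat.add_le_add_right (min_le_left _ _) 2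
  rw [Real.logb_div (by linarith) hwi.ne'] at this
  linarith

lemma two_div_pow_codeLength_le (hw : ∀ i ∈ Finset.Icc 1 h, 0 < w i)
    (hi : i ∈ Finset.Icc 1 h) :
    2 / 2 ^ codeLength h w i ≤
      (w i / ∑ j ∈ Finset.Icc 1 h, w j + 1 / 2 ^ Nat.clog 2 h) / 2 := by
  set W := ∑ j ∈ Finset.Icc 1 h, w j
  have hwi := hw i hi
  have hWpos : 0 < W := hwi.trans_le (Finset.single_le_sum (fun j hj => (hw j hj).le) hi)
  set a := ⌈Real.logb 2 (W / w i)⌉₊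
  have ha : 1 / (2 : ℝ) ^ a ≤ w i / W := by
    have : W / w i ≤ 2 ^ a := by
      calc W / w i = 2 ^ Real.logb 2 (W / w i) :=
            (Real.rpow_logb two_pos one_lt_two.ne' (by positivity)).symm
        _ ≤ 2 ^ (a : ℝ) := Real.rpow_le_rpow_of_exponent_le one_le_two (Nat.le_ceil _)
        _ = 2 ^ a := Real.rpow_natCast 2 a
    rw [one_div_le (by positivity) (by positivity), one_div_div]
    exact this
  have hmin : 1 / (2 : ℝ) ^ min a (Nat.clog 2 h) ≤ 1 / 2 ^ a + 1 / 2 ^ Nat.clog 2 h := by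
    rcases min_cases a (Nat.clog 2 h) with ⟨he, -⟩ | ⟨he, -⟩ <;> rw [he] <;>
      linarith [show (0 : ℝ) < 1 / 2 ^ a by positivity,
        show (0 : ℝ) < 1 / 2 ^ Nat.clog 2 h by positivity]
  have hsplit : 2 / (2 : ℝ) ^ codeLength h w i = 1 / 2 ^ min a (Nat.clog 2 h) / 2 := by
    change 2 / (2 : ℝ) ^ (min a (Nat.clog 2 h) + 2) = _
    rw [pow_add]
    field_simp
  rw [hsplit]
  linarith

lemma cumMass_nonneg (i : ℕ) : 0 ≤ cumMass h w i :=
  Finset.sum_nonneg fun _ _ => by positivity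

lemma cumMass_mono {i j : ℕ} (hij : i ≤ j) : cumMass h w i ≤ cumMass h w j :=
  Finset.sum_le_sum_of_subset_of_nonneg (Finset.Icc_subset_Icc_right hij)
    fun _ _ _ => by positivity

lemma cumMass_sub_one_add (hi : 1 ≤ i) :
    cumMass h w (i - 1) + 2 / 2 ^ codeLength h w i = cumMass h w i := by
  obtain ⟨k, rfl⟩ := Nat.exists_eq_add_of_le' hi
  rw [cumMass, cumMass, Nat.add_sub_cancel, Finset.sum_Icc_succ_top (by omega)]

lemma cumMass_le_one (hw : ∀ i ∈ Finset.Icc 1 h, 0 < w i) : cumMass h w h ≤ 1 := by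
  set W := ∑ j ∈ Finset.Icc 1 h, w j
  have hpow : (h : ℝ) ≤ 2 ^ Nat.clog 2 h := by exact_mod_cast Nat.le_pow_clog one_lt_two h
  calc cumMass h w h
      ≤ ∑ j ∈ Finset.Icc 1 h, (w j / W + 1 / 2 ^ Nat.clog 2 h) / 2 :=
        Finset.sum_le_sum fun j hj => two_div_pow_codeLength_le hw hj
    _ = ((∑ j ∈ Finset.Icc 1 h, w j) / W + h / 2 ^ Nat.clog 2 h) / 2 := by
        rw [← Finset.sum_div, Finset.sum_add_distrib, ← Finset.sum_div, Finset.sum_const,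
          Nat.card_Icc, nsmul_eq_mul]
        simp [div_eq_mul_inv]
    _ ≤ (1 + 1) / 2 := by
        gcongr
        · exact div_self_le_one W
        · exact div_le_one_of_le₀ hpow (by positivity)
    _ = 1 := by norm_num

lemma cumMass_le_codeNum_div (i : ℕ) :
    cumMass h w (i - 1) ≤ codeNum h w i / 2 ^ codeLength h w i := by
  rw [le_div_iff₀ (by positivity)]
  exact Nat.le_ceil _

lemma codeNum_add_one_div_lt (hi : 1 ≤ i) :
    (codeNum h w i + 1) / 2 ^ codeLength h w i < cumMass h w i := by
  have hceil : (codeNum h w i : ℝ) < cumMass h w (i - 1) * 2 ^ codeLength h w i + 1 :=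
    Nat.ceil_lt_add_one (mul_nonneg (cumMass_nonneg _) (by positivity))
  rw [← cumMass_sub_one_add hi, div_lt_iff₀ (by positivity), add_mul,
    div_mul_cancel₀ _ (by positivity)]
  linarith

lemma codeNum_lt (hw : ∀ i ∈ Finset.Icc 1 h, 0 < w i) (hi : i ∈ Finset.Icc 1 h) :
    codeNum h w i < 2 ^ codeLength h w i := by
  have hi' := Finset.mem_Icc.mp hi
  have h₁ := codeNum_add_one_div_lt (h := h) (w := w) hi'.1
  have h₂ := (cumMass_mono (h := h) (w := w) hi'.2).trans (cumMass_le_one hw)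
  rw [div_lt_iff₀ (by positivity)] at h₁
  have : (codeNum h w i : ℝ) + 1 < 2 ^ codeLength h w i :=
    h₁.trans_le (mul_le_of_le_one_left (by positivity) h₂)
  exact_mod_cast (lt_add_one _).trans this

lemma isSplitChain_codeword (hw : ∀ i ∈ Finset.Icc 1 h, 0 < w i) :
    IsSplitChain h (codeword h w) := by
  intro i hi j hj hij
  apply splitsAt_lcpLen_toBits (codeNum_lt hw hi) (codeNum_lt hw hj)
  have hlt : ((codeNum h w i + 1 : ℕ) : ℝ) / 2 ^ codeLength h w i <
      (codeNum h w j : ℝ) / 2 ^ codeLength h w j := by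
    push_cast
    calc _ < cumMass h w i := codeNum_add_one_div_lt (Finset.mem_Icc.mp hi).1
      _ ≤ cumMass h w (j - 1) := cumMass_mono (by omega)
      _ ≤ _ := cumMass_le_codeNum_div j
  rw [div_lt_div_iff₀ (by positivity) (by positivity)] at hlt
  exact_mod_cast hlt.le

lemma length_label_codeword_le (hw : ∀ i ∈ Finset.Icc 1 h, 0 < w i)
    (hi : i ∈ Finset.Icc 1 h) :
    ((label (codeword h w) i).length : ℝ) ≤
      Real.logb 2 (∑ j ∈ Finset.Icc 1 h, w j) - Real.logb 2 (w i) +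
        13 * (Real.logb 2 (Real.logb 2 h + 2) + 1) := by
  have hh : 1 ≤ h := (Finset.mem_Icc.mp hi).1.trans (Finset.mem_Icc.mp hi).2
  set K := Nat.clog 2 (Nat.clog 2 h + 3)
  have hsize : (codeLength h w i).size ≤ K := Nat.size_le.mpr <|
    (codeLength_le_clog i).trans_lt (Nat.lt_succ_self _) |>.trans_le
      (Nat.le_pow_clog one_lt_two _)
  have hlen : (label (codeword h w) i).length ≤ codeLength h w i + 4 * K + 2 := by
    have := length_label_le (codeword h w) i
    simp only [codeword, length_toBits] at this
    omega
  have hK : (K : ℝ) < Real.logb 2 (Real.logb 2 h + 2) + 2 := by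
    have := clog_two_lt_logb_add_one (n := Nat.clog 2 h + 3) (by omega)
    push_cast at this
    linarith [logb_clog_add_three_le hh]
  have hy : 0 ≤ Real.logb 2 (Real.logb 2 h + 2) :=
    Real.logb_nonneg one_lt_two
      (by linarith [Real.logb_nonneg one_lt_two (Nat.one_le_cast.mpr hh : (1 : ℝ) ≤ h)])
  have hlenR : ((label (codeword h w) i).length : ℝ) ≤ codeLength h w i + 4 * K + 2 := by
    exact_mod_cast hlen
  linarith [codeLength_lt hw hi]

end

end RowCode

open RowCode

/-- row codes: there are a constant `C > 0` and a universal decoder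
`A : {0,1}* × {0,1}* → {−1, 0, 1, ⊥}` (here `⊥ = none`) such that for every `h ≥ 1` and
positive weights `w` on `{1,…,h}` there is a prefix-free code `α` on `{1,…,h}` with
`|α(i)| ≤ log₂ W − log₂ w(i) + C(log₂(log₂ h + 2) + 1)` which lets `A` recognise
equality, successors and predecessors. -/
theorem row_code :
    ∃ C : ℝ, 0 < C ∧ ∃ A : List Bool → List Bool → Option ℤ,
      ∀ h : ℕ, 1 ≤ h → ∀ w : ℕ → ℝ, (∀ i ∈ Finset.Icc 1 h, 0 < w i) →
        ∃ α : ℕ → List Bool,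
          (∀ i ∈ Finset.Icc 1 h, ∀ j ∈ Finset.Icc 1 h, i ≠ j → ¬ (α i <+: α j)) ∧
          (∀ i ∈ Finset.Icc 1 h,
            ((α i).length : ℝ) ≤
              Real.logb 2 (∑ j ∈ Finset.Icc 1 h, w j) - Real.logb 2 (w i) +
                C * (Real.logb 2 (Real.logb 2 h + 2) + 1)) ∧
          (∀ i ∈ Finset.Icc 1 h, ∀ j ∈ Finset.Icc 1 h,
            (j = i → A (α i) (α j) = some 0) ∧
            (j = i + 1 → A (α i) (α j) = some 1) ∧
            (i = j + 1 → A (α i) (α j) = some (-1)) ∧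
            (j ≠ i ∧ j ≠ i + 1 ∧ i ≠ j + 1 → A (α i) (α j) = none)) := by
  refine ⟨13, by norm_num, adjacency, fun h _ w hw => ⟨label (codeword h w), ?_, ?_, ?_⟩⟩
  · exact fun i hi j hj => (isSplitChain_codeword hw).label_not_prefix hi hj
  · exact fun i hi => length_label_codeword_le hw hi
  · intro i hi j hj
    rw [(isSplitChain_codeword hw).adjacency_label hi hj]
    refine ⟨?_, ?_, ?_, ?_⟩ <;> intro hij <;> split_ifs <;> first | rfl | omega
end

section
/- For any non-empty finite sets S_1,…,S_h ⊂ ℝ and any integer a ≥ 1, there exist finite sets V_1,…,V_h ⊂ ℝ such that: (1) V_y ⊇ S_y for each y ∈ {1,…,h}; (2) the sequence V_1,…,V_h is a-chunking; and (3) Σ_{y=1}^h |V_y| ≤ ((a+1)/a)² · Σ_{y=1}^h |S_y|. -/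
/-! Let `sample Y` consist of every `(a+1)`-st element of `Y` in increasing order: it has
`⌊|Y|/(a+1)⌋` elements, and any `a+1` elements of `Y` straddle one of them, so `sample Y`
`a`-chunks `Y`, and so does every superset of it. Build the sets by fractional cascading, first
downwards, `W_y = S_y ∪ sample W_{y+1}`, then upwards, `V_y = W_y ∪ sample V_{y-1}`. Then
`V_{y+1} ⊇ sample V_y`, while `V_y` contains both `sample V_y` and `sample W_{y+1}`, hence chunks
`V_{y+1} = W_{y+1} ∪ sample V_y`. Each pass multiplies the total size by at most
`1 + 1/(a+1) + 1/(a+1)² + ⋯ = (a+1)/a`. -/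

attribute [local instance] Classical.propDecidable

/-- `Chunks a X Y` : the finite set `X` `a`-chunks the finite set `Y`, i.e. every
`(a+1)`-element subset `S ⊆ Y` admits an `x ∈ X` with `min S ≤ x ≤ max S`
(equivalently, `s₁ ≤ x ≤ s₂` for some `s₁, s₂ ∈ S`). -/
def Chunks (a : ℕ) (X Y : Finset ℝ) : Prop :=
  ∀ S ⊆ Y, S.card = a + 1 → ∃ x ∈ X, (∃ s ∈ S, s ≤ x) ∧ ∃ s ∈ S, x ≤ s

open Finset

section Sample

variable {α : Type*} [LinearOrder α] (a : ℕ)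

noncomputable def chunkSample (Y : Finset α) : Finset α :=
  Finset.map (Y.orderEmbOfFin rfl).toEmbedding {i : Fin #Y | (a + 1) ∣ (i : ℕ) + 1}

lemma chunkSample_subset (Y : Finset α) : chunkSample a Y ⊆ Y := by
  intro x hx
  obtain ⟨i, -, rfl⟩ := mem_map.mp hx
  exact Y.orderEmbOfFin_mem rfl i

lemma card_chunkSample (Y : Finset α) : #(chunkSample a Y) = #Y / (a + 1) := by
  rw [chunkSample, card_map, ← Nat.card_multiples, ← card_map Fin.valEmbedding]
  congr 1
  ext k
  simp only [mem_map, mem_filter, mem_univ, true_and, Fin.valEmbedding_apply, mem_range]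
  exact ⟨fun ⟨i, hi, hik⟩ => hik ▸ ⟨i.2, hi⟩, fun ⟨hk, hdvd⟩ => ⟨⟨k, hk⟩, hdvd, rfl⟩⟩

end Sample

lemma Chunks.mono {a : ℕ} {X X' Y Y' : Finset ℝ} (hc : Chunks a X Y) (hX : X ⊆ X')
    (hY : Y' ⊆ Y) : Chunks a X' Y' := fun S hS hcard => by
  obtain ⟨x, hx, hxS⟩ := hc S (hS.trans hY) hcard
  exact ⟨x, hX hx, hxS⟩

lemma Chunks.union_of_subset {a : ℕ} {X Y Z : Finset ℝ} (hc : Chunks a X Y) (hZ : Z ⊆ X) :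
    Chunks a X (Y ∪ Z) := by
  intro S hS hcard
  by_cases hSZ : Disjoint S Z
  · exact hc S (fun s hs => (mem_union.mp (hS hs)).resolve_right (disjoint_left.mp hSZ hs)) hcard
  · obtain ⟨z, hzS, hzZ⟩ := not_disjoint_iff.mp hSZ
    exact ⟨z, hZ hzZ, ⟨z, hzS, le_rfl⟩, ⟨z, hzS, le_rfl⟩⟩

lemma chunks_of_forall_orderEmbOfFin {a : ℕ} {X Y : Finset ℝ}
    (hX : ∀ i j : Fin #Y, (i : ℕ) + a ≤ j →
      ∃ x ∈ X, Y.orderEmbOfFin rfl i ≤ x ∧ x ≤ Y.orderEmbOfFin rfl j) :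
    Chunks a X Y := by
  intro S hSY hcard
  have hS : S.Nonempty := card_pos.mp (by omega)
  set e := Y.orderEmbOfFin rfl
  have mem_range_e : ∀ s ∈ S, ∃ k, e k = s := fun s hs => by
    rw [← Set.mem_range, range_orderEmbOfFin]
    exact hSY hs
  obtain ⟨i, hi⟩ := mem_range_e _ (S.min'_mem hS)
  obtain ⟨j, hj⟩ := mem_range_e _ (S.max'_mem hS)
  have hspread : (i : ℕ) + a ≤ j := by
    have hsub : S ⊆ (Icc i j).map e.toEmbedding := by
      intro s hs
      obtain ⟨k, rfl⟩ := mem_range_e s hs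
      refine mem_map_of_mem _ (mem_Icc.mpr ⟨?_, ?_⟩)
      · exact e.le_iff_le.mp (hi ▸ S.min'_le _ hs)
      · exact e.le_iff_le.mp (hj ▸ S.le_max' _ hs)
    have hcard_le := card_le_card hsub
    rw [card_map, Fin.card_Icc, hcard] at hcard_le
    omega
  obtain ⟨x, hx, hix, hxj⟩ := hX i j hspread
  exact ⟨x, hx, ⟨_, S.min'_mem hS, hi ▸ hix⟩, ⟨_, S.max'_mem hS, hj ▸ hxj⟩⟩

lemma chunks_chunkSample (a : ℕ) (Y : Finset ℝ) : Chunks a (chunkSample a Y) Y := by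
  refine chunks_of_forall_orderEmbOfFin fun i j hij => ?_
  obtain ⟨r, hr, hr_lt⟩ : ∃ r, r = (i + a + 1) % (a + 1) ∧ r < a + 1 :=
    ⟨_, rfl, Nat.mod_lt _ (Nat.zero_lt_succ a)⟩
  -- the first index `k ≥ i` with `(a+1) ∣ k + 1`
  let k : Fin #Y := ⟨i + a - r, by omega⟩
  have hk : (a + 1) ∣ (k : ℕ) + 1 := by
    have : (k : ℕ) + 1 = i + a + 1 - (i + a + 1) % (a + 1) := by simp only [k]; omega
    exact this ▸ Nat.dvd_sub_mod _
  refine ⟨Y.orderEmbOfFin rfl k, mem_map_of_mem _ (by simpa using hk), ?_, ?_⟩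
  · exact (Y.orderEmbOfFin rfl).monotone (Fin.le_def.mpr (by simp only [k]; omega))
  · exact (Y.orderEmbOfFin rfl).monotone (Fin.le_def.mpr (by simp only [k]; omega))

lemma sum_Icc_one_reflect {M : Type*} [AddCommMonoid M] (f : ℕ → M) (n : ℕ) :
    ∑ k ∈ Icc 1 n, f (n + 1 - k) = ∑ k ∈ Icc 1 n, f k := by
  have h := sum_Ico_reflect f 1 (m := n + 1) (n := n + 1) (by omega)
  rwa [show n + 1 + 1 - (n + 1) = 1 by omega, Nat.add_sub_cancel, Ico_add_one_right_eq_Icc] at h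

section Cascade

variable {α : Type*} [LinearOrder α] (a : ℕ) (T : ℕ → Finset α)

noncomputable def cascade : ℕ → Finset α
  | 0 => ∅
  | n + 1 => T (n + 1) ∪ chunkSample a (cascade n)

lemma subset_cascade {n : ℕ} (hn : n ≠ 0) : T n ⊆ cascade a T n := by
  obtain ⟨n, rfl⟩ := Nat.exists_eq_succ_of_ne_zero hn
  exact subset_union_left

lemma chunkSample_cascade_subset (n : ℕ) : chunkSample a (cascade a T n) ⊆ cascade a T (n + 1) :=
  subset_union_right

lemma card_cascade_succ_le (n : ℕ) :
    (a + 1) * #(cascade a T (n + 1)) ≤ (a + 1) * #(T (n + 1)) + #(cascade a T n) :=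
  calc (a + 1) * #(cascade a T (n + 1))
      ≤ (a + 1) * (#(T (n + 1)) + #(cascade a T n) / (a + 1)) := by
        rw [← card_chunkSample]; exact Nat.mul_le_mul_left _ (card_union_le _ _)
    _ ≤ (a + 1) * #(T (n + 1)) + #(cascade a T n) := by
        rw [mul_add]; exact Nat.add_le_add_left (Nat.mul_div_le _ _) _

lemma mul_sum_card_cascade_le (m : ℕ) :
    a * ∑ n ∈ Icc 1 m, #(cascade a T n) ≤ (a + 1) * ∑ n ∈ Icc 1 m, #(T n) := by
  suffices a * ∑ n ∈ Icc 1 m, #(cascade a T n) + #(cascade a T m) ≤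
      (a + 1) * ∑ n ∈ Icc 1 m, #(T n) by omega
  induction m with
  | zero => simp [cascade]
  | succ m ih =>
    rw [sum_Icc_succ_top (by omega), sum_Icc_succ_top (by omega)]
    linarith [card_cascade_succ_le a T m]

end Cascade

section CascadeChunks

variable (a : ℕ) (T : ℕ → Finset ℝ)

lemma cascade_succ_chunks (n : ℕ) : Chunks a (cascade a T (n + 1)) (cascade a T n) :=
  (chunks_chunkSample a _).mono (chunkSample_cascade_subset a T n) subset_rfl

lemma cascade_chunks_succ {n : ℕ} (hT : chunkSample a (T (n + 1)) ⊆ cascade a T n) :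
    Chunks a (cascade a T n) (cascade a T (n + 1)) :=
  ((chunks_chunkSample a _).mono hT subset_rfl).union_of_subset (chunkSample_subset a _)

end CascadeChunks

section DownCascade

variable {α : Type*} [LinearOrder α] (a h : ℕ) (T : ℕ → Finset α)

noncomputable def downCascade (y : ℕ) : Finset α :=
  cascade a (fun k => T (h + 1 - k)) (h + 1 - y)

lemma subset_downCascade {y : ℕ} (hy : y ≤ h) : T y ⊆ downCascade a h T y := by
  have := subset_cascade a (fun k => T (h + 1 - k)) (n := h + 1 - y) (by omega)
  rwa [show h + 1 - (h + 1 - y) = y by omega] at this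

lemma chunkSample_downCascade_subset {y : ℕ} (hy : y ≤ h) :
    chunkSample a (downCascade a h T (y + 1)) ⊆ downCascade a h T y := by
  have := chunkSample_cascade_subset a (fun k => T (h + 1 - k)) (h - y)
  rwa [← show h + 1 - y = h - y + 1 by omega, ← show h + 1 - (y + 1) = h - y by omega] at this

lemma mul_sum_card_downCascade_le :
    a * ∑ y ∈ Icc 1 h, #(downCascade a h T y) ≤ (a + 1) * ∑ y ∈ Icc 1 h, #(T y) := by
  have h_le := mul_sum_card_cascade_le a (fun k => T (h + 1 - k)) h
  rwa [sum_Icc_one_reflect fun y => #(T y),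
    ← sum_Icc_one_reflect fun k => #(cascade a (fun k => T (h + 1 - k)) k)] at h_le

end DownCascade

theorem chunking_sequence_general (h a : ℕ) (ha : 1 ≤ a) (S : ℕ → Finset ℝ) :
    ∃ V : ℕ → Finset ℝ,
      (∀ y ∈ Finset.Icc 1 h, S y ⊆ V y) ∧
      (∀ y, 1 ≤ y → y + 1 ≤ h → Chunks a (V y) (V (y + 1)) ∧ Chunks a (V (y + 1)) (V y)) ∧
      ((∑ y ∈ Finset.Icc 1 h, (V y).card : ℝ) ≤
        (((a : ℝ) + 1) / a) ^ 2 * (∑ y ∈ Finset.Icc 1 h, (S y).card : ℕ)) := by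
  set W := downCascade a h S
  set V := cascade a W
  refine ⟨V, fun y hy => (subset_downCascade a h S (mem_Icc.mp hy).2).trans
      (subset_cascade a W (by grind)),
    fun y hy hyh => ⟨cascade_chunks_succ a W
      ((chunkSample_downCascade_subset a h S (by omega)).trans (subset_cascade a W (by omega))),
      cascade_succ_chunks a W y⟩, ?_⟩
  have key : a ^ 2 * ∑ y ∈ Icc 1 h, #(V y) ≤ (a + 1) ^ 2 * ∑ y ∈ Icc 1 h, #(S y) :=
    calc a ^ 2 * ∑ y ∈ Icc 1 h, #(V y) ≤ a * ((a + 1) * ∑ y ∈ Icc 1 h, #(W y)) := by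
          rw [sq, mul_assoc]; exact Nat.mul_le_mul_left a (mul_sum_card_cascade_le a W h)
      _ = (a + 1) * (a * ∑ y ∈ Icc 1 h, #(W y)) := by ring
      _ ≤ (a + 1) ^ 2 * ∑ y ∈ Icc 1 h, #(S y) := by
          rw [sq, mul_assoc]
          exact Nat.mul_le_mul_left (a + 1) (mul_sum_card_downCascade_le a h S)
  have ha' : (0 : ℝ) < a := by exact_mod_cast ha
  rw [div_pow, div_mul_eq_mul_div, le_div_iff₀ (by positivity), mul_comm]
  exact_mod_cast key

/-- fractional cascading style chunking: given non-empty finite sets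
`S_1, …, S_h ⊂ ℝ` and an integer `a ≥ 1`, there are finite sets `V_y ⊇ S_y` forming an
`a`-chunking sequence with `Σ |V_y| ≤ ((a+1)/a)² Σ |S_y|`. -/
theorem chunking_sequence (h a : ℕ) (ha : 1 ≤ a) (S : ℕ → Finset ℝ)
    (hS : ∀ y ∈ Finset.Icc 1 h, (S y).Nonempty) :
    ∃ V : ℕ → Finset ℝ,
      (∀ y ∈ Finset.Icc 1 h, S y ⊆ V y) ∧
      (∀ y, 1 ≤ y → y + 1 ≤ h → Chunks a (V y) (V (y + 1)) ∧ Chunks a (V (y + 1)) (V y)) ∧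
      ((∑ y ∈ Finset.Icc 1 h, (V y).card : ℝ) ≤
        (((a : ℝ) + 1) / a) ^ 2 * (∑ y ∈ Finset.Icc 1 h, (S y).card : ℕ)) :=
  chunking_sequence_general h a ha S
end

section
/- Let T be a non-empty binary search tree and let I be a non-empty finite subset of ℝ ∖ V(T) such that V(T) 1-chunks I. Let T' be the tree obtained from T by applying BulkInsert(I). Then T' contains T: σ_{T'}(x) = σ_T(x) for every x ∈ V(T); and h(T') ≤ h(T) + 1. -/
/-!
Inserting `y` into a binary search tree leaves the search path of `x` unchanged as soon as
some node of the tree lies between `x` and `y`: the two searches then part ways at or above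
that node. For an old node `x` this node is `x` itself; for a new value `x ∈ I` the chunking
hypothesis provides such a node of `T` for every other `y ∈ I`, while inserting `x` itself
does not move its own search path. Hence every node of `T'` has the signature it has as a
search path in `T`, and a search path in `T` is at most one step longer than `h(T)`.
-/

attribute [local instance] Classical.propDecidable

namespace BT

/-- Standard binary search tree insertion: the new value is attached at the external
node ending its search path. -/
noncomputable def ins : BT → ℝ → BT
  | .leaf, x => .node .leaf x .leaf
  | .node l v r, x =>
    if x < v then .node (ins l x) v r
    else if v < x then .node l v (ins r x)
    else .node l v r

end BT

/-- `t'` is obtained from `t` by `BulkInsert(I)`: inserting the elements of the finite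
set `I` one by one, in some order, by standard binary search tree insertion. -/
def BulkInsertRel (t : BT) (I : Finset ℝ) (t' : BT) : Prop :=
  ∃ l : List ℝ, l.Nodup ∧ l.toFinset = I ∧ t' = l.foldl BT.ins t

namespace BT

lemma nodes_ins (s : BT) (y : ℝ) : (s.ins y).nodes = insert y s.nodes := by
  induction s with
  | leaf => rfl
  | node l v r ihl ihr =>
    rcases lt_trichotomy y v with h | rfl | h
    · simp only [ins, if_pos h, nodes, ihl]
      grind
    · simp [ins, nodes]
    · simp only [ins, if_neg h.not_gt, if_pos h, nodes, ihr]
      grind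

lemma nodes_foldl_ins (l : List ℝ) (s : BT) :
    (l.foldl ins s).nodes = s.nodes ∪ l.toFinset := by
  induction l generalizing s with
  | nil => simp
  | cons y l ih =>
    rw [List.foldl_cons, ih, nodes_ins, List.toFinset_cons, Finset.insert_union,
      Finset.union_insert]

lemma isBST.ins {s : BT} (hs : s.isBST) (y : ℝ) : (s.ins y).isBST := by
  induction s with
  | leaf => simp [BT.ins, isBST, nodes]
  | node l v r ihl ihr =>
    obtain ⟨hl, hr, hbl, hbr⟩ := hs
    rcases lt_trichotomy y v with h | rfl | h
    · simp only [BT.ins, if_pos h, isBST, nodes_ins, Finset.forall_mem_insert]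
      exact ⟨⟨h, hl⟩, hr, ihl hbl, hbr⟩
    · simpa [BT.ins] using ⟨hl, hr, hbl, hbr⟩
    · simp only [BT.ins, if_neg h.not_gt, if_pos h, isBST, nodes_ins, Finset.forall_mem_insert]
      exact ⟨hl, ⟨h, hr⟩, hbl, ihr hbr⟩

lemma sig_ins_self (s : BT) (y : ℝ) : (s.ins y).sig y = s.sig y := by
  induction s with
  | leaf => simp [ins, sig]
  | node l v r ihl ihr =>
    rcases lt_trichotomy y v with h | rfl | h
    · simp [ins, sig, h, ihl]
    · simp [ins, sig]
    · simp [ins, sig, h, h.not_gt, ihr]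

lemma sig_ins_of_mem_uIcc {s : BT} (hs : s.isBST) {x y z : ℝ} (hz : z ∈ s.nodes)
    (hzxy : z ∈ Set.uIcc x y) : (s.ins y).sig x = s.sig x := by
  induction s with
  | leaf => simp [nodes] at hz
  | node l v r ihl ihr =>
    obtain ⟨hl, hr, hbl, hbr⟩ := hs
    obtain ⟨hxz, hzy⟩ := Set.mem_Icc.1 hzxy
    have hz' : z = v ∨ z ∈ l.nodes ∨ z ∈ r.nodes := by simpa [nodes] using hz
    by_cases hy : y < v
    · by_cases hx : x < v
      · have hzl : z ∈ l.nodes := by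
          have : z < v := hzy.trans_lt (max_lt hx hy)
          grind
        simp [ins, sig, hx, hy, ihl hbl hzl]
      · simp [ins, sig, hx, hy]
    · by_cases hy' : v < y
      · by_cases hx : v < x
        · have hzr : z ∈ r.nodes := by
            have : v < z := (lt_min hx hy').trans_le hxz
            grind
          simp [ins, sig, hy, hy', hx, hx.not_gt, ihr hbr hzr]
        · simp [ins, sig, hy, hy', hx]
      · simp [ins, sig, hy, hy']

lemma sig_foldl_ins {s : BT} (hs : s.isBST) {x : ℝ} {l : List ℝ}
    (hl : ∀ y ∈ l, y ≠ x → ∃ z ∈ s.nodes, z ∈ Set.uIcc x y) :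
    (l.foldl ins s).sig x = s.sig x := by
  induction l generalizing s with
  | nil => rfl
  | cons y l ih =>
    have hstep : (s.ins y).sig x = s.sig x := by
      by_cases hyx : y = x
      · exact hyx ▸ sig_ins_self s y
      · obtain ⟨z, hz, hzxy⟩ := hl y List.mem_cons_self hyx
        exact sig_ins_of_mem_uIcc hs hz hzxy
    have hsub : s.nodes ⊆ (s.ins y).nodes := nodes_ins s y ▸ Finset.subset_insert y s.nodes
    rw [List.foldl_cons, ih (hs.ins y), hstep]
    intro y' hy' hy'x
    obtain ⟨z, hz, hzxy⟩ := hl y' (List.mem_cons_of_mem y hy') hy'x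
    exact ⟨z, hsub hz, hzxy⟩

lemma length_sig_le_height {t : BT} {x : ℝ} (hx : x ∈ t.nodes) :
    (t.sig x).length ≤ t.height :=
  Finset.le_sup (f := fun x => (t.sig x).length) hx

/-- `z` is the last node on the search path of `x`. -/
lemma exists_mem_sig_eq_dropLast {t : BT} (ht : t.isBST) {x : ℝ} (hx : t.sig x ≠ []) :
    ∃ z ∈ t.nodes, t.sig z = (t.sig x).dropLast := by
  induction t with
  | leaf => simp [sig] at hx
  | node l v r ihl ihr =>
    obtain ⟨hl, hr, hbl, hbr⟩ := ht
    rcases lt_trichotomy x v with h | rfl | h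
    · by_cases hxl : l.sig x = []
      · exact ⟨v, by simp [nodes], by simp [sig, h, hxl]⟩
      · obtain ⟨z, hz, hzx⟩ := ihl hbl hxl
        refine ⟨z, by simp [nodes, hz], ?_⟩
        simp [sig, h, hl z hz, hzx, List.dropLast_cons_of_ne_nil hxl]
    · simp [sig] at hx
    · by_cases hxr : r.sig x = []
      · exact ⟨v, by simp [nodes], by simp [sig, h, h.not_gt, hxr]⟩
      · obtain ⟨z, hz, hzx⟩ := ihr hbr hxr
        have hvz := hr z hz
        refine ⟨z, by simp [nodes, hz], ?_⟩
        simp [sig, h, h.not_gt, hvz, hvz.not_gt, hzx, List.dropLast_cons_of_ne_nil hxr]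

lemma length_sig_le_height_add_one {t : BT} (ht : t.isBST) (x : ℝ) :
    (t.sig x).length ≤ t.height + 1 := by
  by_cases hx : t.sig x = []
  · simp [hx]
  · obtain ⟨z, hz, hzx⟩ := exists_mem_sig_eq_dropLast ht hx
    have := length_sig_le_height hz
    rw [hzx, List.length_dropLast] at this
    omega

end BT

lemma Chunks.exists_mem_uIcc {X Y : Finset ℝ} (h : Chunks 1 X Y) {x y : ℝ} (hx : x ∈ Y)
    (hy : y ∈ Y) (hxy : x ≠ y) : ∃ z ∈ X, z ∈ Set.uIcc x y := by
  obtain ⟨z, hz, ⟨s, hs, hsz⟩, ⟨s', hs', hzs'⟩⟩ :=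
    h {x, y} (Finset.insert_subset hx (Finset.singleton_subset_iff.2 hy))
      (Finset.card_pair hxy)
  refine ⟨z, hz, Set.mem_Icc.2 ⟨?_, ?_⟩⟩
  · rcases (by simpa using hs : s = x ∨ s = y) with rfl | rfl
    · exact (min_le_left _ _).trans hsz
    · exact (min_le_right _ _).trans hsz
  · rcases (by simpa using hs' : s' = x ∨ s' = y) with rfl | rfl
    · exact hzs'.trans (le_max_left _ _)
    · exact hzs'.trans (le_max_right _ _)

theorem bulkInsert_contains_and_height_general (t : BT) (ht : t.isBST)
    (I : Finset ℝ) (hchunk : Chunks 1 t.nodes I)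
    (t' : BT) (h' : BulkInsertRel t I t') :
    (∀ x ∈ t.nodes, t'.sig x = t.sig x) ∧ t'.height ≤ t.height + 1 := by
  obtain ⟨l, -, rfl, rfl⟩ := h'
  have hsig : ∀ x ∈ t.nodes ∪ l.toFinset, (l.foldl BT.ins t).sig x = t.sig x := by
    intro x hx
    refine BT.sig_foldl_ins ht fun y hy hyx => ?_
    rcases Finset.mem_union.1 hx with hx | hx
    · exact ⟨x, hx, Set.left_mem_uIcc⟩
    · exact hchunk.exists_mem_uIcc hx (List.mem_toFinset.2 hy) hyx.symm
  refine ⟨fun x hx => hsig x (Finset.mem_union_left _ hx), Finset.sup_le fun x hx => ?_⟩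
  rw [BT.nodes_foldl_ins] at hx
  rw [hsig x hx]
  exact BT.length_sig_le_height_add_one ht x

/-- bulk insertion preserves structure: if `V(T)` 1-chunks `I` and
`T'` is obtained from `T` by `BulkInsert(I)` (inserting the elements of `I` in any
order), then `T'` contains `T` (signatures of old nodes are unchanged) and
`h(T') ≤ h(T) + 1`. -/
theorem bulkInsert_contains_and_height (t : BT) (ht : t.isBST)
    (htne : t.nodes.Nonempty) (I : Finset ℝ) (hIne : I.Nonempty)
    (hdisj : ∀ x ∈ I, x ∉ t.nodes) (hchunk : Chunks 1 t.nodes I)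
    (t' : BT) (h' : BulkInsertRel t I t') :
    (∀ x ∈ t.nodes, t'.sig x = t.sig x) ∧ t'.height ≤ t.height + 1 :=
  bulkInsert_contains_and_height_general t ht I hchunk t' h'
end

section
/- Let T be a binary search tree and let D be a non-empty strict subset of V(T) such that V(T) ∖ D 1-chunks D. Let T' be a tree obtained from T by applying BulkDelete(D). Then |T| / 4 ≤ |T'| ≤ |T|, where |·| denotes the number of nodes. -/
attribute [local instance] Classical.propDecidable

namespace BT

/-- Delete the largest value of the tree (following the recursive deletion rule) and
return it together with the remaining tree. -/
noncomputable def extractMax : BT → Option (ℝ × BT)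
  | .leaf => none
  | .node l v .leaf =>
    match extractMax l with
    | none => some (v, .leaf)
    | some (m, l') => some (v, .node l' m .leaf)
  | .node l v (.node rl rv rr) =>
    match extractMax (.node rl rv rr) with
    | none => some (v, l)
    | some (m, r') => some (m, .node l v r')

/-- Delete the smallest value of the tree (following the recursive deletion rule) and
return it together with the remaining tree. -/
noncomputable def extractMin : BT → Option (ℝ × BT)
  | .leaf => none
  | .node .leaf v r =>
    match extractMin r with
    | none => some (v, .leaf)
    | some (m, r') => some (v, .node .leaf m r')
  | .node (.node ll lv lr) v r =>
    match extractMin (.node ll lv lr) with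
    | none => some (v, r)
    | some (m, l') => some (m, .node l' v r)

/-- Recursive deletion of the value `x`: if the node holding `x` is a leaf, remove it;
otherwise, if it has a left child, recursively delete the largest value of its left
subtree and replace `x` with it; otherwise recursively delete the smallest value of its
right subtree and replace `x` with it. -/
noncomputable def delete : BT → ℝ → BT
  | .leaf, _ => .leaf
  | .node l v r, x =>
    if x < v then .node (delete l x) v r
    else if v < x then .node l v (delete r x)
    else
      match extractMax l with
      | some (m, l') => .node l' m r
      | none =>
        match extractMin r with
        | some (m, r') => .node .leaf m r'
        | none => .leaf

end BT

/-- `t'` is obtained from `t` by `BulkDelete(D)`: deleting the elements of the finite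
set `D` one by one, in some order. -/
def BulkDeleteRel (t : BT) (D : Finset ℝ) (t' : BT) : Prop :=
  ∃ l : List ℝ, l.Nodup ∧ l.toFinset = D ∧ t' = l.foldl BT.delete t

namespace BT

lemma card_nodes_le_size : ∀ t : BT, t.nodes.card ≤ t.size
  | .leaf => by simp [nodes, size]
  | .node l v r => by
    have hl := card_nodes_le_size l
    have hr := card_nodes_le_size r
    calc (insert v (nodes l ∪ nodes r)).card ≤ (nodes l ∪ nodes r).card + 1 :=
          Finset.card_insert_le _ _
      _ ≤ (nodes l).card + (nodes r).card + 1 := by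
          have := Finset.card_union_le (nodes l) (nodes r); omega
      _ ≤ size l + size r + 1 := by omega

lemma extractMax_eq_none : ∀ t : BT, t.extractMax = none → t = .leaf
  | .leaf, _ => rfl
  | .node l v .leaf, h => by
    rw [extractMax] at h; split at h <;> simp at h
  | .node l v (.node rl rv rr), h => by
    rw [extractMax] at h; split at h <;> simp at h

lemma extractMin_eq_none : ∀ t : BT, t.extractMin = none → t = .leaf
  | .leaf, _ => rfl
  | .node .leaf v r, h => by
    rw [extractMin] at h; split at h <;> simp at h
  | .node (.node ll lv lr) v r, h => by
    rw [extractMin] at h; split at h <;> simp at h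

lemma extractMax_size : ∀ (t : BT) (m : ℝ) (t' : BT),
    t.extractMax = some (m, t') → t'.size + 1 = t.size
  | .leaf, m, t' => by simp [extractMax]
  | .node l v .leaf, m, t' => by
    intro h
    rw [extractMax] at h
    split at h
    · rename_i heq
      have := extractMax_eq_none l heq
      subst this
      simp only [Option.some.injEq, Prod.mk.injEq] at h
      obtain ⟨rfl, h2⟩ := h
      subst h2
      simp [size]
    · rename_i mm l' heq
      have := extractMax_size l mm l' heq
      simp only [Option.some.injEq, Prod.mk.injEq] at h
      obtain ⟨rfl, h2⟩ := h
      subst h2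
      simp [size]; omega
  | .node l v (.node rl rv rr), m, t' => by
    intro h
    rw [extractMax] at h
    split at h
    · rename_i heq
      exact absurd (extractMax_eq_none _ heq) (by simp)
    · rename_i mm r' heq
      have := extractMax_size _ mm r' heq
      simp only [Option.some.injEq, Prod.mk.injEq] at h
      obtain ⟨rfl, h2⟩ := h
      subst h2
      simp [size] at this ⊢; omega

lemma extractMin_size : ∀ (t : BT) (m : ℝ) (t' : BT),
    t.extractMin = some (m, t') → t'.size + 1 = t.size
  | .leaf, m, t' => by simp [extractMin]
  | .node .leaf v r, m, t' => by
    intro h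
    rw [extractMin] at h
    split at h
    · rename_i heq
      have := extractMin_eq_none r heq
      subst this
      simp only [Option.some.injEq, Prod.mk.injEq] at h
      obtain ⟨rfl, h2⟩ := h
      subst h2
      simp [size]
    · rename_i mm r' heq
      have := extractMin_size r mm r' heq
      simp only [Option.some.injEq, Prod.mk.injEq] at h
      obtain ⟨rfl, h2⟩ := h
      subst h2
      simp [size]; omega
  | .node (.node ll lv lr) v r, m, t' => by
    intro h
    rw [extractMin] at h
    split at h
    · rename_i heq
      exact absurd (extractMin_eq_none _ heq) (by simp)
    · rename_i mm l' heq
      have := extractMin_size _ mm l' heq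
      simp only [Option.some.injEq, Prod.mk.injEq] at h
      obtain ⟨rfl, h2⟩ := h
      subst h2
      simp [size] at this ⊢; omega

lemma delete_size : ∀ (t : BT) (x : ℝ),
    (t.delete x).size ≤ t.size ∧ t.size ≤ (t.delete x).size + 1
  | .leaf, x => by simp [delete, size]
  | .node l v r, x => by
    by_cases h1 : x < v
    · have := delete_size l x
      simp only [delete, if_pos h1, size]
      omega
    · by_cases h2 : v < x
      · have := delete_size r x
        simp only [delete, if_neg h1, if_pos h2, size]
        omega
      · simp only [delete, if_neg h1, if_neg h2]
        cases hl : extractMax l with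
        | some p =>
          obtain ⟨m, l'⟩ := p
          have := extractMax_size l m l' hl
          simp [size]; omega
        | none =>
          have hleaf := extractMax_eq_none l hl
          subst hleaf
          cases hr : extractMin r with
          | some p =>
            obtain ⟨m, r'⟩ := p
            have := extractMin_size r m r' hr
            simp [size]; omega
          | none =>
            have := extractMin_eq_none r hr
            subst this
            simp [size]

lemma foldl_delete_size (l : List ℝ) : ∀ t : BT,
    (l.foldl BT.delete t).size ≤ t.size ∧
    t.size ≤ (l.foldl BT.delete t).size + l.length := by
  induction l with
  | nil => intro t; simp
  | cons x xs ih =>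
    intro t
    have h1 := delete_size t x
    have h2 := ih (t.delete x)
    simp only [List.foldl_cons, List.length_cons]
    omega

end BT

lemma chunk_card_aux : ∀ (n : ℕ) (D X : Finset ℝ), D.card ≤ n →
    (∀ x ∈ X, x ∉ D) →
    (∀ s1 ∈ D, ∀ s2 ∈ D, s1 < s2 → ∃ x ∈ X, s1 ≤ x ∧ x ≤ s2) →
    D.card ≤ X.card + 1 := by
  intro n
  induction n with
  | zero => intro D X h _ _; omega
  | succ n ih =>
    intro D X hcard hdisj hprop
    by_cases hsmall : D.card ≤ 1
    · omega
    · have hne : D.Nonempty := Finset.card_pos.mp (by omega)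
      set d1 := D.min' hne with hd1
      have hd1D : d1 ∈ D := D.min'_mem hne
      set D' := D.erase d1 with hD'
      have hD'card : D'.card = D.card - 1 := Finset.card_erase_of_mem hd1D
      have hD'ne : D'.Nonempty := Finset.card_pos.mp (by omega)
      set d2 := D'.min' hD'ne with hd2
      have hd2D' : d2 ∈ D' := D'.min'_mem hD'ne
      have hd2D : d2 ∈ D := Finset.mem_of_mem_erase hd2D'
      have hd2ne : d2 ≠ d1 := Finset.ne_of_mem_erase hd2D'
      have hlt : d1 < d2 := lt_of_le_of_ne (D.min'_le d2 hd2D) (Ne.symm hd2ne)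
      obtain ⟨x, hxX, hx1, hx2⟩ := hprop d1 hd1D d2 hd2D hlt
      have hxlt : x < d2 := lt_of_le_of_ne hx2 (fun h => hdisj x hxX (h ▸ hd2D))
      have key : D'.card ≤ (X.erase x).card + 1 := by
        apply ih D' (X.erase x) (by omega)
        · intro y hy
          exact fun hc => hdisj y (Finset.mem_of_mem_erase hy) (Finset.mem_of_mem_erase hc)
        · intro s1 hs1 s2 hs2 hlt'
          obtain ⟨y, hyX, hy1, hy2⟩ :=
            hprop s1 (Finset.mem_of_mem_erase hs1) s2 (Finset.mem_of_mem_erase hs2) hlt'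
          refine ⟨y, Finset.mem_erase.mpr ⟨?_, hyX⟩, hy1, hy2⟩
          have : d2 ≤ s1 := D'.min'_le s1 hs1
          exact fun h => absurd (h ▸ hy1) (by push_neg; linarith)
      have hXcard : (X.erase x).card = X.card - 1 := Finset.card_erase_of_mem hxX
      have hXpos : 1 ≤ X.card := Finset.card_pos.mpr ⟨x, hxX⟩
      omega

/-- bulk deletion and sizes: if `D` is a non-empty strict subset of
`V(T)` such that `V(T) ∖ D` 1-chunks `D`, and `T'` is obtained from `T` by
`BulkDelete(D)`, then `|T| / 4 ≤ |T'| ≤ |T|`. -/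
theorem bulkDelete_size (t : BT) (ht : t.isBST)
    (D : Finset ℝ) (hDne : D.Nonempty) (hD : D ⊂ t.nodes)
    (hchunk : Chunks 1 (t.nodes \ D) D)
    (t' : BT) (h' : BulkDeleteRel t D t') :
    (t.size : ℝ) / 4 ≤ (t'.size : ℝ) ∧ t'.size ≤ t.size := by
  obtain ⟨l, hnd, hlD, rfl⟩ := h'
  have hlen : l.length = D.card := by
    rw [← hlD, List.toFinset_card_of_nodup hnd]
  have hsz := BT.foldl_delete_size l t
  -- counting: D.card ≤ (nodes \ D).card + 1
  have hdisj : ∀ x ∈ t.nodes \ D, x ∉ D := fun x hx => (Finset.mem_sdiff.mp hx).2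
  have hpair : ∀ s1 ∈ D, ∀ s2 ∈ D, s1 < s2 → ∃ x ∈ t.nodes \ D, s1 ≤ x ∧ x ≤ s2 := by
    intro s1 hs1 s2 hs2 hlt
    have hScard : ({s1, s2} : Finset ℝ).card = 2 := by
      rw [Finset.card_insert_of_notMem (by simp [ne_of_lt hlt]), Finset.card_singleton]
    obtain ⟨x, hxX, ⟨a, ha, hax⟩, ⟨b, hb, hxb⟩⟩ :=
      hchunk {s1, s2} (by intro y hy; simp at hy; rcases hy with rfl | rfl <;> assumption)
        hScard
    refine ⟨x, hxX, ?_, ?_⟩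
    · simp at ha; rcases ha with rfl | rfl <;> linarith
    · simp at hb; rcases hb with rfl | rfl <;> linarith
  have hcount : D.card ≤ (t.nodes \ D).card + 1 :=
    chunk_card_aux D.card D _ le_rfl hdisj hpair
  have hsub : D ⊆ t.nodes := hD.subset
  have hsdcard : (t.nodes \ D).card = t.nodes.card - D.card :=
    Finset.card_sdiff_of_subset hsub
  have hDle : D.card ≤ t.nodes.card := Finset.card_le_card hsub
  have hnodes_le : t.nodes.card ≤ t.size := BT.card_nodes_le_size t
  -- t.nodes has at least 2 elements
  have h2 : 2 ≤ t.nodes.card := by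
    obtain ⟨d, hd⟩ := hDne
    obtain ⟨v, hv, hvD⟩ := Finset.exists_of_ssubset hD
    have : ({d, v} : Finset ℝ) ⊆ t.nodes := by
      intro y hy; simp at hy; rcases hy with rfl | rfl
      · exact hsub hd
      · exact hv
    calc 2 = ({d, v} : Finset ℝ).card := by
            rw [Finset.card_insert_of_notMem (by simp; exact fun h => hvD (h ▸ hd)),
              Finset.card_singleton]
      _ ≤ t.nodes.card := Finset.card_le_card this
  -- size t = nodes.card? not needed; use size ≥ nodes.card ≥ 2
  have hsize2 : 2 ≤ t.size := le_trans h2 hnodes_le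
  have h2k : 2 * D.card ≤ t.size + 1 := by omega
  set n := t.size
  set n' := (l.foldl BT.delete t).size
  have hub : n' ≤ n := hsz.1
  have hlb : n ≤ n' + D.card := by rw [← hlen]; exact hsz.2
  refine ⟨?_, hub⟩
  have c1 : (n : ℝ) ≤ (n' : ℝ) + (D.card : ℝ) := by exact_mod_cast hlb
  have c2 : 2 * (D.card : ℝ) ≤ (n : ℝ) + 1 := by exact_mod_cast h2k
  have c3 : (2 : ℝ) ≤ (n : ℝ) := by exact_mod_cast hsize2
  linarith
end

section
/- Let T be a binary search tree, let x be any node of T, and let T_{<x} and T_{>x} be the two binary search trees produced by applying Split(x) to T. Then every node z of T_{<x} satisfies d_{T_{<x}}(z) ≤ d_T(z), and every node z of T_{>x} satisfies d_{T_{>x}}(z) ≤ d_T(z); consequently, if T_{<x} is non-empty then h(T_{<x}) ≤ h(T), and if T_{>x} is non-empty then h(T_{>x}) ≤ h(T). -/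
attribute [local instance] Classical.propDecidable

namespace BT

/-- `Split(x)`: split a binary search tree along the search path of `x` into the two
binary search trees on `{z ∈ V(T) : z < x}` and `{z ∈ V(T) : z > x}`. -/
noncomputable def split : BT → ℝ → BT × BT
  | .leaf, _ => (.leaf, .leaf)
  | .node l v r, x =>
    if x < v then
      ((split l x).1, .node (split l x).2 v r)
    else if v < x then
      (.node l v (split r x).1, (split r x).2)
    else (l, r)

end BT


namespace BT

lemma split_nodes (x : ℝ) : ∀ t : BT,
    (t.split x).1.nodes ⊆ t.nodes ∧ (t.split x).2.nodes ⊆ t.nodes := by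
  intro t
  induction t with
  | leaf => simp [split]
  | node l v r ihl ihr =>
    simp only [split]
    split_ifs with h1 h2
    · constructor
      · intro z hz
        simp only [nodes, Finset.mem_insert, Finset.mem_union]
        exact Or.inr (Or.inl (ihl.1 hz))
      · intro z hz
        simp only [nodes, Finset.mem_insert, Finset.mem_union] at hz ⊢
        rcases hz with h | h | h
        · exact Or.inl h
        · exact Or.inr (Or.inl (ihl.2 h))
        · exact Or.inr (Or.inr h)
    · constructor
      · intro z hz
        simp only [nodes, Finset.mem_insert, Finset.mem_union] at hz ⊢
        rcases hz with h | h | h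
        · exact Or.inl h
        · exact Or.inr (Or.inl h)
        · exact Or.inr (Or.inr (ihr.1 h))
      · intro z hz
        simp only [nodes, Finset.mem_insert, Finset.mem_union]
        exact Or.inr (Or.inr (ihr.2 hz))
    · constructor
      · intro z hz
        simp only [nodes, Finset.mem_insert, Finset.mem_union]
        exact Or.inr (Or.inl hz)
      · intro z hz
        simp only [nodes, Finset.mem_insert, Finset.mem_union]
        exact Or.inr (Or.inr hz)

lemma split_sig (x : ℝ) : ∀ t : BT, t.isBST →
    (∀ z ∈ (t.split x).1.nodes, ((t.split x).1.sig z).length ≤ (t.sig z).length) ∧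
    (∀ z ∈ (t.split x).2.nodes, ((t.split x).2.sig z).length ≤ (t.sig z).length) := by
  intro t
  induction t with
  | leaf => simp [split]
  | node l v r ihl ihr =>
    rintro ⟨hl, hr, hbl, hbr⟩
    obtain ⟨ih1, ih2⟩ := ihl hbl
    obtain ⟨ih1r, ih2r⟩ := ihr hbr
    simp only [split]
    split_ifs with h1 h2
    · constructor
      · intro z hz
        have hzl : z ∈ l.nodes := (split_nodes x l).1 hz
        have hzv : z < v := hl z hzl
        simp only [sig, if_pos hzv, List.length_cons]
        exact le_trans (ih1 z hz) (Nat.le_succ _)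
      · intro z hz
        simp only [nodes, Finset.mem_insert, Finset.mem_union] at hz
        rcases hz with rfl | h | h
        · simp [sig]
        · have hzl : z ∈ l.nodes := (split_nodes x l).2 h
          have hzv : z < v := hl z hzl
          simp only [sig, if_pos hzv, List.length_cons]
          exact Nat.succ_le_succ (ih2 z h)
        · have hzv : v < z := hr z h
          simp only [sig, if_neg (not_lt.mpr hzv.le), if_pos hzv, List.length_cons]
          exact le_rfl
    · constructor
      · intro z hz
        simp only [nodes, Finset.mem_insert, Finset.mem_union] at hz
        rcases hz with rfl | h | h
        · simp [sig]
        · have hzv : z < v := hl z h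
          simp only [sig, if_pos hzv, List.length_cons]
          exact le_rfl
        · have hzr : z ∈ r.nodes := (split_nodes x r).1 h
          have hzv : v < z := hr z hzr
          simp only [sig, if_neg (not_lt.mpr hzv.le), if_pos hzv, List.length_cons]
          exact Nat.succ_le_succ (ih1r z h)
      · intro z hz
        have hzr : z ∈ r.nodes := (split_nodes x r).2 hz
        have hzv : v < z := hr z hzr
        simp only [sig, if_neg (not_lt.mpr hzv.le), if_pos hzv, List.length_cons]
        exact le_trans (ih2r z hz) (Nat.le_succ _)
    · constructor
      · intro z hz
        have hzv : z < v := hl z hz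
        simp only [sig, if_pos hzv, List.length_cons]
        exact Nat.le_succ _
      · intro z hz
        have hzv : v < z := hr z hz
        simp only [sig, if_neg (not_lt.mpr hzv.le), if_pos hzv, List.length_cons]
        exact Nat.le_succ _

end BT

/-- split does not increase depths: if `T_{<x}` and `T_{>x}` are
produced by applying `Split(x)` to `T`, then depths of nodes do not increase and, when
non-empty, the resulting trees have height at most `h(T)`. -/
theorem split_heights (t : BT) (ht : t.isBST) (x : ℝ) (hx : x ∈ t.nodes) :
    (∀ z ∈ (t.split x).1.nodes, ((t.split x).1.sig z).length ≤ (t.sig z).length) ∧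
    (∀ z ∈ (t.split x).2.nodes, ((t.split x).2.sig z).length ≤ (t.sig z).length) ∧
    ((t.split x).1 ≠ .leaf → (t.split x).1.height ≤ t.height) ∧
    ((t.split x).2 ≠ .leaf → (t.split x).2.height ≤ t.height) := by
  
  obtain ⟨h1, h2⟩ := BT.split_sig x t ht
  obtain ⟨n1, n2⟩ := BT.split_nodes x t
  refine ⟨h1, h2, ?_, ?_⟩
  · intro _
    apply Finset.sup_le
    intro z hz
    exact le_trans (h1 z hz) (Finset.le_sup (f := fun y => (t.sig y).length) (n1 hz))
  · intro _
    apply Finset.sup_le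
    intro z hz
    exact le_trans (h2 z hz) (Finset.le_sup (f := fun y => (t.sig y).length) (n2 hz))
end

section
/- Let T be a binary search tree, let x be any node of T, let k ≥ 1 be an integer, and let T' be the tree obtained from T by applying Balance(x, k). Then: (1) h(T') ≤ h(T) + 1; and (2) for every node z of T' that is a T'-descendant of x with d_{T'}(z) = d_T(x) + k + 1, the subtree of T' rooted at z has size at most |T_x| / 2^k, where T_x is the subtree of T rooted at x and |·| denotes the number of nodes. -/
attribute [local instance] Classical.propDecidable

namespace BT

/-- In-order (sorted, for a binary search tree) list of the values in the tree. -/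
def inorder : BT → List ℝ
  | .leaf => []
  | .node l v r => inorder l ++ v :: inorder r

/-- `MultiSplit`: split a tree at an increasing list of values by splitting at the
median value and recursing on both sides; returns the ordered list of resulting trees. -/
noncomputable def multiSplit : BT → List ℝ → List BT
  | t, [] => [t]
  | t, x₀ :: xs' =>
    multiSplit (split t ((x₀ :: xs').getD (((x₀ :: xs').length + 1) / 2 - 1) 0)).1
        ((x₀ :: xs').take (((x₀ :: xs').length + 1) / 2 - 1)) ++
    multiSplit (split t ((x₀ :: xs').getD (((x₀ :: xs').length + 1) / 2 - 1) 0)).2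
        ((x₀ :: xs').drop (((x₀ :: xs').length + 1) / 2))
termination_by _ xs => xs.length
decreasing_by
  · simp [List.length_take]; omega
  · simp [List.length_drop]; omega

/-- Replace the external (leaf) positions of a tree, from left to right, by the trees of
the given list (this is the order consistent with the binary search tree property);
also returns the unused trees of the list. -/
def glue : BT → List BT → BT × List BT
  | .leaf, ts => (ts.headD .leaf, ts.tail)
  | .node l v r, ts =>
    ((.node (glue l ts).1 v (glue r (glue l ts).2).1), (glue r (glue l ts).2).2)

/-- The ordered list of subtrees hanging below depth `k`: one (possibly empty) tree for
each gap between consecutive nodes of depth `< k`; these are the trees of the forest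
`T − Z` where `Z` is the set of nodes of depth `< k`. -/
def slots : ℕ → BT → List BT
  | 0, t => [t]
  | _ + 1, .leaf => [.leaf]
  | k + 1, .node l _ r => slots k l ++ slots k r

/-- The set `Z` of nodes of the tree of depth less than `k`. -/
noncomputable def shallowNodes (t : BT) (k : ℕ) : Finset ℝ :=
  (nodes t).filter fun x => (sig t x).length < k

/-- The list `X = x_1, …, x_{2^k − 1}` where `x_j` is the element of rank
`⌊j·|t| / 2^k⌋` in the sorted order of the values of `t`. -/
noncomputable def rankElems (t : BT) (k : ℕ) : List ℝ :=
  (List.range (2 ^ k - 1)).map fun j => (inorder t).getD ((j + 1) * size t / 2 ^ k) 0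

/-- The ordered list of trees obtained by applying `MultiSplit` to each tree of the
forest `t − Z`, each with the increasing list of the elements of `X` it contains. -/
noncomputable def balParts (t : BT) (k : ℕ) : List BT :=
  (slots k t).flatMap fun ti =>
    multiSplit ti ((inorder ti).filter fun x => x ∈ rankElems t k)

/-- `t` is a perfectly balanced binary search tree on the finite set `s`: its height
equals `⌊log₂ |t|⌋`. -/
def IsPerfBalBST (s : Finset ℝ) (t : BT) : Prop :=
  isBST t ∧ nodes t = s ∧ height t = Nat.log 2 (size t)

/-- `IsBalanceResult k tx s'` : `s'` is a possible result of applying `Balance(·, k)` to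
the (sub)tree `tx`: if `|tx| < 2^k`, `s'` is a perfectly balanced binary search tree on
the values of `tx`; otherwise `s'` is obtained by attaching, at the external positions
of a perfectly balanced binary search tree on `Z ∪ X`, the trees obtained by the
`MultiSplit`s of the trees of the forest `tx − Z`. -/
def IsBalanceResult (k : ℕ) (tx : BT) (s' : BT) : Prop :=
  if size tx < 2 ^ k then IsPerfBalBST (nodes tx) s'
  else
    ∃ t0 : BT,
      IsPerfBalBST (shallowNodes tx k ∪ (rankElems tx k).toFinset) t0 ∧
      s' = (glue t0 (balParts tx k)).1

/-- Replace the subtree rooted at the node holding `x` by `s`. -/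
noncomputable def replaceAt : BT → ℝ → BT → BT
  | .leaf, _, _ => .leaf
  | .node l v r, x, s =>
    if x < v then .node (replaceAt l x s) v r
    else if v < x then .node l v (replaceAt r x s)
    else s

/-- `BalanceRel t x k t'` : `t'` is a possible result of applying `Balance(x, k)` to `t`,
i.e. of replacing the subtree of `t` rooted at `x` by a result of `Balance(·, k)`. -/
def BalanceRel (t : BT) (x : ℝ) (k : ℕ) (t' : BT) : Prop :=
  ∃ s' : BT, IsBalanceResult k (subtreeAt t x) s' ∧ t' = replaceAt t x s'

/-- `BulkBalanceRel k θ t t'` : `t'` is a possible result of applying `BulkBalance(θ, k)`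
to `t`, i.e. of applying `Balance(x, k)` to every node `x` of depth `θ` in `t` (a no-op
if there is no such node). -/
def BulkBalanceRel (k : ℕ) : ℕ → BT → BT → Prop
  | 0, t, t' => (t = .leaf ∧ t' = .leaf) ∨ IsBalanceResult k t t'
  | _ + 1, .leaf, t' => t' = .leaf
  | θ + 1, .node l v r, t' =>
      ∃ l' r' : BT, BulkBalanceRel k θ l l' ∧ BulkBalanceRel k θ r r' ∧ t' = .node l' v r'

end BT

/-!
Everything is read off in-order traversals. Write `interlace [w₁, …, wₘ] [L₀, …, Lₘ]` for
`L₀ ++ w₁ :: L₁ ++ ⋯ ++ wₘ :: Lₘ`, the in-order of a tree with in-order `[w₁, …, wₘ]` whose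
external positions carry trees with in-orders `Lᵢ`. Cutting `T_x` below depth `k` into slots,
`MultiSplit`ting each slot at the elements of `X` it contains, and gluing the pieces below the
perfectly balanced tree on `Z ∪ X` all preserve in-order in this sense, so the result `S` of
`Balance(x, k)` is a binary search tree on `V(T_x)` in which every piece is a contiguous block of
the sorted list of `V(T_x)` avoiding `X`. Since consecutive ranks `⌊j n / 2^k⌋` differ by at most
`⌊n / 2^k⌋ + 1`, such a block has at most `n / 2^k` elements.

The top tree has fewer than `2^(k+1)` nodes, hence at most `k + 1` levels, so a node at depth
`k + 1` of `S` lies in a piece, which gives (2). Pieces are no taller than the slots they come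
from, which have at most `h(T_x) + 1 - k` levels; so `S` has at most `h(T_x) + 2` levels, and
replacing `T_x` by `S` in `T` gives (1). If `|T_x| < 2^k`, the perfectly balanced result has at
most `k` levels and both claims are immediate.
-/

namespace Nat

lemma exists_mul_div_mem_Ico {n q a b : ℕ} (hq : 0 < q) (hab : a + b ≤ n) (hb : n < b * q) :
    ∃ j, 0 < j ∧ j < q ∧ a ≤ j * n / q ∧ j * n / q < a + b := by
  have hex : ∃ j, 0 < j ∧ a ≤ j * n / q := ⟨q, hq, by rw [Nat.mul_div_cancel_left n hq]; omega⟩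
  set j := Nat.find hex
  obtain ⟨hj0, hja⟩ : 0 < j ∧ a ≤ j * n / q := Nat.find_spec hex
  have hnq : n / q < b := (Nat.div_lt_iff_lt_mul hq).2 hb
  have hlt : j * n / q < a + b := by
    rcases Nat.lt_or_ge 1 j with hj1 | hj1
    · have hprev : ¬ (0 < j - 1 ∧ a ≤ (j - 1) * n / q) := Nat.find_min hex (by omega)
      have hstep : j * n / q ≤ (j - 1) * n / q + n / q + 1 := by
        have := Nat.add_div_le_div_add_div_add_one ((j - 1) * n) n q
        rwa [← Nat.succ_mul, Nat.succ_eq_add_one, Nat.sub_add_cancel hj0] at this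
      omega
    · rw [show j = 1 by omega, one_mul]
      omega
  refine ⟨j, hj0, ?_, hja, hlt⟩
  by_contra hjq
  have : j = q := le_antisymm (Nat.find_min' hex ⟨hq, by rw [Nat.mul_div_cancel_left n hq]; omega⟩)
    (by omega)
  rw [this, Nat.mul_div_cancel_left n hq] at hlt
  omega

end Nat

namespace List

variable {α β : Type*}

def interlace : List α → List (List α) → List α
  | [], Ls => Ls.flatten
  | w :: ws, [] => w :: ws
  | w :: ws, L :: Ls => L ++ w :: interlace ws Ls

@[simp] lemma interlace_nil_singleton (L : List α) : interlace [] [L] = L := by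
  simp [interlace]

lemma interlace_append {A B : List α} {As Bs : List (List α)} (p : α)
    (hA : As.length = A.length + 1) :
    interlace (A ++ p :: B) (As ++ Bs) = interlace A As ++ p :: interlace B Bs := by
  induction A generalizing As with
  | nil =>
    obtain ⟨L, rfl⟩ := List.length_eq_one_iff.1 hA
    simp [interlace]
  | cons a A ih =>
    obtain ⟨L, As, rfl⟩ := List.exists_cons_of_length_eq_add_one hA
    simp [interlace, ih (by simpa using hA)]

lemma length_interlace {ws : List α} {Ls : List (List α)} (h : Ls.length = ws.length + 1) :
    (interlace ws Ls).length = ws.length + (Ls.map length).sum := by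
  induction ws generalizing Ls with
  | nil =>
    obtain ⟨L, rfl⟩ := List.length_eq_one_iff.1 h
    simp
  | cons w ws ih =>
    obtain ⟨L, Ls, rfl⟩ := List.exists_cons_of_length_eq_add_one h
    simp [interlace, ih (by simpa using h)]
    omega

lemma exists_append_of_length_eq_add {l : List α} {m n : ℕ} (h : l.length = m + n) :
    ∃ l₁ l₂, l = l₁ ++ l₂ ∧ l₁.length = m ∧ l₂.length = n :=
  ⟨l.take m, l.drop m, (take_append_drop m l).symm, by simp; omega, by simp; omega⟩

lemma mem_interlace {y : α} {ws : List α} {Ls : List (List α)} :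
    y ∈ interlace ws Ls ↔ y ∈ ws ∨ ∃ L ∈ Ls, y ∈ L := by
  induction ws generalizing Ls with
  | nil => simp [interlace]
  | cons w ws ih =>
    cases Ls with
    | nil => simp [interlace]
    | cons L Ls => simp only [interlace, mem_append, mem_cons, ih, exists_eq_or_imp]; tauto

lemma sublist_interlace (ws : List α) (Ls : List (List α)) : ws <+ interlace ws Ls := by
  induction ws generalizing Ls with
  | nil => exact nil_sublist _
  | cons w ws ih =>
    cases Ls with
    | nil => exact Sublist.refl _
    | cons L Ls => exact ((ih Ls).cons_cons w).trans (sublist_append_right L _)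

lemma infix_interlace {L : List α} {ws : List α} {Ls : List (List α)} (hL : L ∈ Ls) :
    L <:+: interlace ws Ls := by
  induction ws generalizing Ls with
  | nil => exact infix_of_mem_flatten hL
  | cons w ws ih =>
    cases Ls with
    | nil => simp at hL
    | cons L' Ls =>
      rcases mem_cons.1 hL with rfl | hL
      · exact (prefix_append L _).isInfix
      · exact (ih hL).trans ((suffix_cons w _).isInfix.trans (suffix_append L' _).isInfix)

lemma notMem_of_nodup_interlace {ws : List α} {Ls : List (List α)}
    (hnd : (interlace ws Ls).Nodup) {L : List α} (hL : L ∈ Ls) {y : α} (hy : y ∈ L) :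
    y ∉ ws := by
  induction ws generalizing Ls with
  | nil => simp
  | cons w ws ih =>
    cases Ls with
    | nil => simp at hL
    | cons L' Ls =>
      rw [interlace, nodup_append, nodup_cons] at hnd
      obtain ⟨-, ⟨hw, hnd⟩, hdisj⟩ := hnd
      rintro (_ | ⟨_, hyw⟩)
      · rcases mem_cons.1 hL with rfl | hL
        · exact hdisj y hy y mem_cons_self rfl
        · exact hw ((infix_interlace hL).subset hy)
      · rcases mem_cons.1 hL with rfl | hL
        · exact hdisj y hy y (mem_cons_of_mem _ ((sublist_interlace ws Ls).subset hyw)) rfl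
        · exact ih hnd hL hyw

lemma interlace_interlace_flatMap {zs : List α} {ts : List β} (ws : β → List α)
    (gs : β → List (List α)) (hts : ts.length = zs.length + 1)
    (hgs : ∀ t ∈ ts, (gs t).length = (ws t).length + 1) :
    interlace (interlace zs (ts.map ws)) (ts.flatMap gs) =
      interlace zs (ts.map fun t => interlace (ws t) (gs t)) := by
  induction zs generalizing ts with
  | nil =>
    obtain ⟨t, rfl⟩ := List.length_eq_one_iff.1 hts
    simp
  | cons z zs ih =>
    obtain ⟨t, ts, rfl⟩ := List.exists_cons_of_length_eq_add_one hts
    simp only [map_cons, interlace, flatMap_cons]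
    rw [interlace_append z (hgs t mem_cons_self),
      ih (by simpa using hts) fun t' ht' => hgs t' (mem_cons_of_mem _ ht')]

lemma filter_lt_append_cons_filter_gt [LinearOrder α] {l : List α} (hl : l.Pairwise (· < ·))
    {p : α} (hp : p ∈ l) : l.filter (· < p) ++ p :: l.filter (p < ·) = l := by
  induction l with
  | nil => simp at hp
  | cons a l ih =>
    rw [pairwise_cons] at hl
    rcases mem_cons.1 hp with rfl | hp
    · rw [filter_cons_of_neg (by simp), filter_cons_of_neg (by simp),
        filter_eq_nil_iff.2 fun b hb => by simpa using (hl.1 b hb).not_gt,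
        filter_eq_self.2 fun b hb => by simpa using hl.1 b hb, nil_append]
    · have hap := hl.1 p hp
      simp [hap, hap.not_gt, ih hl.2 hp]

lemma length_mul_le_of_infix {L l : List α} {q : ℕ} (d : α) (hq : 0 < q) (hl : l <:+: L)
    (hr : ∀ j, 0 < j → j < q → L.getD (j * L.length / q) d ∉ l) : l.length * q ≤ L.length := by
  obtain ⟨s, u, rfl⟩ := hl
  by_contra hlen
  obtain ⟨j, hj0, hjq, hlo, hhi⟩ := Nat.exists_mul_div_mem_Ico (a := s.length) hq
    (by simp only [length_append]; omega) (not_le.1 hlen)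
  apply hr j hj0 hjq
  generalize (s ++ l ++ u).length = n at hlo hhi ⊢
  rw [append_assoc, getD_append_right _ _ _ _ hlo, getD_append _ _ _ _ (by omega),
    getD_eq_getElem _ _ (by omega)]
  exact getElem_mem _

end List

namespace BT

attribute [simp] nodes size isBST inorder

@[simp] lemma nodes_node (l : BT) (v : ℝ) (r : BT) :
    nodes (.node l v r) = insert v (nodes l ∪ nodes r) := rfl

@[simp] lemma sig_node_self (l : BT) (v : ℝ) (r : BT) : sig (.node l v r) v = [] := by
  simp [sig]

lemma sig_node_of_lt {l : BT} {v z : ℝ} {r : BT} (h : z < v) :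
    sig (.node l v r) z = false :: sig l z := by
  simp [sig, h]

lemma sig_node_of_gt {l : BT} {v z : ℝ} {r : BT} (h : v < z) :
    sig (.node l v r) z = true :: sig r z := by
  simp [sig, h, h.not_gt]

@[simp] lemma subtreeAt_node_self (l : BT) (v : ℝ) (r : BT) :
    subtreeAt (.node l v r) v = .node l v r := by
  simp [subtreeAt]

lemma subtreeAt_node_of_lt {l : BT} {v z : ℝ} {r : BT} (h : z < v) :
    subtreeAt (.node l v r) z = subtreeAt l z := by
  simp [subtreeAt, h]

lemma subtreeAt_node_of_gt {l : BT} {v z : ℝ} {r : BT} (h : v < z) :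
    subtreeAt (.node l v r) z = subtreeAt r z := by
  simp [subtreeAt, h, h.not_gt]

lemma sig_length_le_height {t : BT} {z : ℝ} (hz : z ∈ nodes t) :
    (sig t z).length ≤ height t :=
  Finset.le_sup (f := fun x => (sig t x).length) hz

lemma mem_left_of_lt {l : BT} {v z : ℝ} {r : BT} (h : isBST (.node l v r))
    (hz : z ∈ nodes (.node l v r)) (hlt : z < v) : z ∈ nodes l := by
  simp only [nodes_node, Finset.mem_insert, Finset.mem_union] at hz
  rcases hz with rfl | hz | hz
  · exact absurd hlt (lt_irrefl z)
  · exact hz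
  · exact absurd (h.2.1 z hz) hlt.not_gt

lemma mem_right_of_gt {l : BT} {v z : ℝ} {r : BT} (h : isBST (.node l v r))
    (hz : z ∈ nodes (.node l v r)) (hgt : v < z) : z ∈ nodes r := by
  simp only [nodes_node, Finset.mem_insert, Finset.mem_union] at hz
  rcases hz with rfl | hz | hz
  · exact absurd hgt (lt_irrefl z)
  · exact absurd (h.1 z hz) hgt.not_gt
  · exact hz

@[simp] lemma mem_inorder {t : BT} {z : ℝ} : z ∈ inorder t ↔ z ∈ nodes t := by
  induction t with
  | leaf => simp
  | node l v r ihl ihr => simp [ihl, ihr]; tauto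

@[simp] lemma length_inorder (t : BT) : (inorder t).length = size t := by
  induction t with
  | leaf => rfl
  | node l v r ihl ihr => simp [ihl, ihr]; omega

lemma isBST_iff_pairwise_inorder {t : BT} : isBST t ↔ (inorder t).Pairwise (· < ·) := by
  induction t with
  | leaf => simp
  | node l v r ihl ihr =>
    simp only [isBST, inorder, List.pairwise_append, List.pairwise_cons, List.mem_cons,
      mem_inorder, ← ihl, ← ihr]
    constructor
    · rintro ⟨hl, hr, bl, br⟩
      exact ⟨bl, ⟨hr, br⟩, fun a ha b hb => hb.elim (· ▸ hl a ha)
        fun hb => (hl a ha).trans (hr b hb)⟩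
    · rintro ⟨bl, ⟨hr, br⟩, h⟩
      exact ⟨fun a ha => h a ha v (Or.inl rfl), hr, bl, br⟩

lemma size_eq_card {t : BT} (h : isBST t) : size t = (nodes t).card := by
  rw [← length_inorder, ← List.toFinset_card_of_nodup
    (isBST_iff_pairwise_inorder.1 h).nodup]
  congr 1
  ext z
  simp

lemma inorder_eq_of_nodes_eq {t : BT} {l : List ℝ} (h : isBST t) (hl : l.Pairwise (· < ·))
    (hn : nodes t = l.toFinset) : inorder t = l :=
  (isBST_iff_pairwise_inorder.1 h).eq_of_mem_iff hl fun z => by simp [hn]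

def numLevels : BT → ℕ
  | .leaf => 0
  | .node l _ r => max (numLevels l) (numLevels r) + 1

lemma size_lt_two_pow_numLevels (t : BT) : size t < 2 ^ numLevels t := by
  induction t with
  | leaf => simp [numLevels]
  | node l v r ihl ihr =>
    have hl := Nat.pow_le_pow_right two_pos (le_max_left (numLevels l) (numLevels r))
    have hr := Nat.pow_le_pow_right two_pos (le_max_right (numLevels l) (numLevels r))
    simp only [size, numLevels, pow_succ]
    omega

lemma sig_length_lt_numLevels {t : BT} (h : isBST t) {z : ℝ} (hz : z ∈ nodes t) :
    (sig t z).length < numLevels t := by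
  induction t with
  | leaf => simp at hz
  | node l v r ihl ihr =>
    simp only [nodes_node, Finset.mem_insert, Finset.mem_union] at hz
    rcases hz with rfl | hz | hz
    · simp [numLevels]
    · rw [sig_node_of_lt (h.1 z hz), numLevels, List.length_cons]
      have := ihl h.2.2.1 hz
      omega
    · rw [sig_node_of_gt (h.2.1 z hz), numLevels, List.length_cons]
      have := ihr h.2.2.2 hz
      omega

lemma exists_sig_length_add_one_eq {t : BT} (h : isBST t) (ht : t ≠ .leaf) :
    ∃ z ∈ nodes t, (sig t z).length + 1 = numLevels t := by
  induction t with
  | leaf => exact absurd rfl ht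
  | node l v r ihl ihr =>
    by_cases hl : numLevels r ≤ numLevels l ∧ l ≠ .leaf
    · obtain ⟨z, hz, hd⟩ := ihl h.2.2.1 hl.2
      refine ⟨z, by simp [hz], ?_⟩
      rw [sig_node_of_lt (h.1 z hz), numLevels, List.length_cons, hd, max_eq_left hl.1]
    by_cases hr : r = .leaf
    · subst hr
      refine ⟨v, by simp, ?_⟩
      cases l <;> simp_all [numLevels]
    · obtain ⟨z, hz, hd⟩ := ihr h.2.2.2 hr
      refine ⟨z, by simp [hz], ?_⟩
      rw [sig_node_of_gt (h.2.1 z hz), numLevels, List.length_cons, hd]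
      cases l <;> simp_all [numLevels]
      omega

lemma height_eq_numLevels_sub_one {t : BT} (h : isBST t) : height t = numLevels t - 1 := by
  rcases eq_or_ne t .leaf with rfl | ht
  · simp [height, numLevels]
  refine le_antisymm (Finset.sup_le fun z hz => ?_) ?_
  · have := sig_length_lt_numLevels h hz
    omega
  · obtain ⟨z, hz, hd⟩ := exists_sig_length_add_one_eq h ht
    have := sig_length_le_height hz
    omega

lemma log_size_le_height {t : BT} (h : isBST t) : Nat.log 2 (size t) ≤ height t := by
  rcases eq_or_ne (size t) 0 with h0 | h0
  · simp [h0]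
  · have := Nat.log_lt_of_lt_pow h0 (size_lt_two_pow_numLevels t)
    rw [height_eq_numLevels_sub_one h]
    omega

lemma nodes_subtreeAt_subset (t : BT) (x : ℝ) : nodes (subtreeAt t x) ⊆ nodes t := by
  induction t with
  | leaf => simp [subtreeAt]
  | node l v r ihl ihr =>
    rw [subtreeAt]
    split_ifs
    · exact ihl.trans (by intro z hz; simp [hz])
    · exact ihr.trans (by intro z hz; simp [hz])
    · exact subset_rfl

lemma size_subtreeAt_le (t : BT) (x : ℝ) : size (subtreeAt t x) ≤ size t := by
  induction t with
  | leaf => simp [subtreeAt]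
  | node l v r ihl ihr =>
    rw [subtreeAt]
    split_ifs <;> simp only [size] <;> omega

lemma isBST_subtreeAt {t : BT} (h : isBST t) (x : ℝ) : isBST (subtreeAt t x) := by
  induction t with
  | leaf => simp [subtreeAt]
  | node l v r ihl ihr =>
    rw [subtreeAt]
    split_ifs
    · exact ihl h.2.2.1
    · exact ihr h.2.2.2
    · exact h

lemma mem_subtreeAt {t : BT} (h : isBST t) {x : ℝ} (hx : x ∈ nodes t) :
    x ∈ nodes (subtreeAt t x) := by
  induction t with
  | leaf => simp at hx
  | node l v r ihl ihr =>
    rcases lt_trichotomy x v with hlt | rfl | hgt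
    · rw [subtreeAt_node_of_lt hlt]
      exact ihl h.2.2.1 (mem_left_of_lt h hx hlt)
    · simp
    · rw [subtreeAt_node_of_gt hgt]
      exact ihr h.2.2.2 (mem_right_of_gt h hx hgt)

lemma sig_eq_append_of_mem_subtreeAt {t : BT} (h : isBST t) {x z : ℝ} (hx : x ∈ nodes t)
    (hz : z ∈ nodes (subtreeAt t x)) : sig t z = sig t x ++ sig (subtreeAt t x) z := by
  induction t with
  | leaf => simp at hx
  | node l v r ihl ihr =>
    rcases lt_trichotomy x v with hlt | rfl | hgt
    · rw [subtreeAt_node_of_lt hlt] at hz ⊢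
      rw [sig_node_of_lt (h.1 z (nodes_subtreeAt_subset l x hz)), sig_node_of_lt hlt,
        ihl h.2.2.1 (mem_left_of_lt h hx hlt) hz, List.cons_append]
    · simp
    · rw [subtreeAt_node_of_gt hgt] at hz ⊢
      rw [sig_node_of_gt (h.2.1 z (nodes_subtreeAt_subset r x hz)), sig_node_of_gt hgt,
        ihr h.2.2.2 (mem_right_of_gt h hx hgt) hz, List.cons_append]

lemma mem_subtreeAt_of_sig_prefix {t : BT} (h : isBST t) {x z : ℝ} (hx : x ∈ nodes t)
    (hz : z ∈ nodes t) (hp : sig t x <+: sig t z) : z ∈ nodes (subtreeAt t x) := by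
  induction t with
  | leaf => simp at hx
  | node l v r ihl ihr =>
    rcases lt_trichotomy x v with hlt | rfl | hgt
    · rw [subtreeAt_node_of_lt hlt]
      rw [sig_node_of_lt hlt] at hp
      rcases lt_trichotomy z v with hz' | rfl | hz'
      · rw [sig_node_of_lt hz', List.cons_prefix_cons] at hp
        exact ihl h.2.2.1 (mem_left_of_lt h hx hlt) (mem_left_of_lt h hz hz') hp.2
      · simp at hp
      · simp [sig_node_of_gt hz'] at hp
    · simpa using hz
    · rw [subtreeAt_node_of_gt hgt]
      rw [sig_node_of_gt hgt] at hp
      rcases lt_trichotomy z v with hz' | rfl | hz'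
      · simp [sig_node_of_lt hz'] at hp
      · simp at hp
      · rw [sig_node_of_gt hz', List.cons_prefix_cons] at hp
        exact ihr h.2.2.2 (mem_right_of_gt h hx hgt) (mem_right_of_gt h hz hz') hp.2

lemma depth_add_height_subtreeAt_le {t : BT} (h : isBST t) {x : ℝ} (hx : x ∈ nodes t) :
    (sig t x).length + height (subtreeAt t x) ≤ height t := by
  obtain ⟨z, hz, hzs⟩ := Finset.exists_mem_eq_sup _ ⟨x, mem_subtreeAt h hx⟩
    (fun w => (sig (subtreeAt t x) w).length)
  have := sig_length_le_height (nodes_subtreeAt_subset t x hz)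
  rw [sig_eq_append_of_mem_subtreeAt h hx hz, List.length_append] at this
  rw [height, hzs]
  exact this

lemma replaceAt_node_of_lt {l : BT} {v x : ℝ} {r : BT} (h : x < v) (s : BT) :
    replaceAt (.node l v r) x s = .node (replaceAt l x s) v r := by
  rw [replaceAt, if_pos h]

lemma replaceAt_node_of_gt {l : BT} {v x : ℝ} {r : BT} (h : v < x) (s : BT) :
    replaceAt (.node l v r) x s = .node l v (replaceAt r x s) := by
  rw [replaceAt, if_neg h.not_gt, if_pos h]

@[simp] lemma replaceAt_node_self (l : BT) (v : ℝ) (r : BT) (s : BT) :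
    replaceAt (.node l v r) v s = s := by
  simp [replaceAt]

section replaceAt

variable {t s : BT} {x : ℝ}

lemma nodes_replaceAt (hn : nodes s = nodes (subtreeAt t x)) :
    nodes (replaceAt t x s) = nodes t := by
  induction t with
  | leaf => simp [replaceAt]
  | node l v r ihl ihr =>
    rcases lt_trichotomy x v with hlt | rfl | hgt
    · rw [subtreeAt_node_of_lt hlt] at hn
      simp [replaceAt_node_of_lt hlt, ihl hn]
    · simpa using hn
    · rw [subtreeAt_node_of_gt hgt] at hn
      simp [replaceAt_node_of_gt hgt, ihr hn]

lemma sig_replaceAt_of_mem (h : isBST t) (hn : nodes s = nodes (subtreeAt t x)) {z : ℝ}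
    (hz : z ∈ nodes s) : sig (replaceAt t x s) z = sig t x ++ sig s z ∧
      subtreeAt (replaceAt t x s) z = subtreeAt s z := by
  induction t with
  | leaf => simp [subtreeAt, hn] at hz
  | node l v r ihl ihr =>
    rcases lt_trichotomy x v with hlt | rfl | hgt
    · rw [subtreeAt_node_of_lt hlt] at hn
      have hzv : z < v := h.1 z (nodes_subtreeAt_subset l x (hn ▸ hz))
      rw [replaceAt_node_of_lt hlt, sig_node_of_lt hzv, sig_node_of_lt hlt,
        subtreeAt_node_of_lt hzv, List.cons_append, List.cons.injEq]
      exact ⟨⟨rfl, (ihl h.2.2.1 hn).1⟩, (ihl h.2.2.1 hn).2⟩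
    · simp
    · rw [subtreeAt_node_of_gt hgt] at hn
      have hzv : v < z := h.2.1 z (nodes_subtreeAt_subset r x (hn ▸ hz))
      rw [replaceAt_node_of_gt hgt, sig_node_of_gt hzv, sig_node_of_gt hgt,
        subtreeAt_node_of_gt hzv, List.cons_append, List.cons.injEq]
      exact ⟨⟨rfl, (ihr h.2.2.2 hn).1⟩, (ihr h.2.2.2 hn).2⟩

lemma sig_replaceAt_of_notMem (h : isBST t) (hn : nodes s = nodes (subtreeAt t x)) {z : ℝ}
    (hz : z ∈ nodes t) (hzs : z ∉ nodes s) : sig (replaceAt t x s) z = sig t z := by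
  induction t with
  | leaf => simp at hz
  | node l v r ihl ihr =>
    rcases lt_trichotomy x v with hlt | rfl | hgt
    · rw [subtreeAt_node_of_lt hlt] at hn
      rw [replaceAt_node_of_lt hlt]
      simp only [nodes_node, Finset.mem_insert, Finset.mem_union] at hz
      rcases hz with rfl | hz | hz
      · simp
      · rw [sig_node_of_lt (h.1 z hz), sig_node_of_lt (h.1 z hz), ihl h.2.2.1 hn hz]
      · rw [sig_node_of_gt (h.2.1 z hz), sig_node_of_gt (h.2.1 z hz)]
    · rw [subtreeAt_node_self] at hn
      exact absurd (hn ▸ hz) hzs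
    · rw [subtreeAt_node_of_gt hgt] at hn
      rw [replaceAt_node_of_gt hgt]
      simp only [nodes_node, Finset.mem_insert, Finset.mem_union] at hz
      rcases hz with rfl | hz | hz
      · simp
      · rw [sig_node_of_lt (h.1 z hz), sig_node_of_lt (h.1 z hz)]
      · rw [sig_node_of_gt (h.2.1 z hz), sig_node_of_gt (h.2.1 z hz), ihr h.2.2.2 hn hz]

lemma height_replaceAt_le (h : isBST t) (hx : x ∈ nodes t)
    (hn : nodes s = nodes (subtreeAt t x)) {m : ℕ}
    (hm : height s ≤ height (subtreeAt t x) + m) : height (replaceAt t x s) ≤ height t + m := by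
  refine Finset.sup_le fun z hz => ?_
  rw [nodes_replaceAt hn] at hz
  by_cases hzs : z ∈ nodes s
  · rw [(sig_replaceAt_of_mem h hn hzs).1, List.length_append]
    have := sig_length_le_height hzs
    have := depth_add_height_subtreeAt_le h hx
    omega
  · rw [sig_replaceAt_of_notMem h hn hz hzs]
    have := sig_length_le_height hz
    omega

lemma mem_of_sig_replaceAt_prefix (h : isBST t) (hx : x ∈ nodes t)
    (hn : nodes s = nodes (subtreeAt t x)) {z : ℝ} (hz : z ∈ nodes (replaceAt t x s))
    (hp : sig (replaceAt t x s) x <+: sig (replaceAt t x s) z) : z ∈ nodes s := by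
  rw [nodes_replaceAt hn] at hz
  by_contra hzs
  have hxs : x ∈ nodes s := hn ▸ mem_subtreeAt h hx
  rw [sig_replaceAt_of_notMem h hn hz hzs, (sig_replaceAt_of_mem h hn hxs).1] at hp
  exact hzs (hn ▸ mem_subtreeAt_of_sig_prefix h hx hz ((List.prefix_append _ _).trans hp))

end replaceAt

lemma split_node_of_lt {l : BT} {v p : ℝ} {r : BT} (h : p < v) :
    split (.node l v r) p = ((split l p).1, .node (split l p).2 v r) := by
  rw [split, if_pos h]

lemma split_node_of_gt {l : BT} {v p : ℝ} {r : BT} (h : v < p) :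
    split (.node l v r) p = (.node l v (split r p).1, (split r p).2) := by
  rw [split, if_neg h.not_gt, if_pos h]

@[simp] lemma split_node_self (l : BT) (v : ℝ) (r : BT) : split (.node l v r) v = (l, r) := by
  simp [split]

lemma inorder_split {t : BT} (h : isBST t) (p : ℝ) :
    inorder (split t p).1 = (inorder t).filter (· < p) ∧
      inorder (split t p).2 = (inorder t).filter (p < ·) := by
  induction t with
  | leaf => simp [split]
  | node l v r ihl ihr =>
    have hl : ∀ z ∈ inorder l, z < v := fun z hz => h.1 z (mem_inorder.1 hz)
    have hr : ∀ z ∈ inorder r, v < z := fun z hz => h.2.1 z (mem_inorder.1 hz)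
    rcases lt_trichotomy p v with hpv | rfl | hpv
    · obtain ⟨ih1, ih2⟩ := ihl h.2.2.1
      have hr1 : (inorder r).filter (· < p) = [] :=
        List.filter_eq_nil_iff.2 fun z hz => by simpa using (hpv.trans (hr z hz)).le
      have hr2 : (inorder r).filter (p < ·) = inorder r :=
        List.filter_eq_self.2 fun z hz => by simpa using hpv.trans (hr z hz)
      simp [split_node_of_lt hpv, ih1, ih2, hr1, hr2, hpv, hpv.not_gt]
    · have hl1 : (inorder l).filter (· < p) = inorder l :=
        List.filter_eq_self.2 fun z hz => by simpa using hl z hz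
      have hl2 : (inorder l).filter (p < ·) = [] :=
        List.filter_eq_nil_iff.2 fun z hz => by simpa using (hl z hz).le
      have hr1 : (inorder r).filter (· < p) = [] :=
        List.filter_eq_nil_iff.2 fun z hz => by simpa using (hr z hz).le
      have hr2 : (inorder r).filter (p < ·) = inorder r :=
        List.filter_eq_self.2 fun z hz => by simpa using hr z hz
      simp [hl1, hl2, hr1, hr2]
    · obtain ⟨ih1, ih2⟩ := ihr h.2.2.2
      have hl1 : (inorder l).filter (· < p) = inorder l :=
        List.filter_eq_self.2 fun z hz => by simpa using (hl z hz).trans hpv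
      have hl2 : (inorder l).filter (p < ·) = [] :=
        List.filter_eq_nil_iff.2 fun z hz => by simpa using ((hl z hz).trans hpv).le
      simp [split_node_of_gt hpv, ih1, ih2, hl1, hl2, hpv, hpv.not_gt]

lemma isBST_split {t : BT} (h : isBST t) (p : ℝ) :
    isBST (split t p).1 ∧ isBST (split t p).2 := by
  have hpw := isBST_iff_pairwise_inorder.1 h
  rw [isBST_iff_pairwise_inorder, isBST_iff_pairwise_inorder, (inorder_split h p).1,
    (inorder_split h p).2]
  exact ⟨hpw.filter _, hpw.filter _⟩

lemma mem_split_fst {t : BT} (h : isBST t) {p z : ℝ} :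
    z ∈ nodes (split t p).1 ↔ z ∈ nodes t ∧ z < p := by
  rw [← mem_inorder, (inorder_split h p).1, List.mem_filter, mem_inorder, decide_eq_true_iff]

lemma mem_split_snd {t : BT} (h : isBST t) {p z : ℝ} :
    z ∈ nodes (split t p).2 ↔ z ∈ nodes t ∧ p < z := by
  rw [← mem_inorder, (inorder_split h p).2, List.mem_filter, mem_inorder, decide_eq_true_iff]

lemma numLevels_split_le (t : BT) (p : ℝ) :
    numLevels (split t p).1 ≤ numLevels t ∧ numLevels (split t p).2 ≤ numLevels t := by
  induction t with
  | leaf => simp [split]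
  | node l v r ihl ihr =>
    rw [split]
    split_ifs <;> simp only [numLevels] <;> omega

lemma length_multiSplit (t : BT) (xs : List ℝ) : (multiSplit t xs).length = xs.length + 1 := by
  induction t, xs using multiSplit.induct with
  | case1 t => simp [multiSplit]
  | case2 t x₀ xs' ih₁ ih₂ =>
    rw [multiSplit, List.length_append, ih₁, ih₂, List.length_take, List.length_drop]
    simp only [List.length_cons]
    omega

lemma numLevels_le_of_mem_multiSplit {t P : BT} {xs : List ℝ} (hP : P ∈ multiSplit t xs) :
    numLevels P ≤ numLevels t := by
  induction t, xs using multiSplit.induct with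
  | case1 t => simp_all [multiSplit]
  | case2 t x₀ xs' ih₁ ih₂ =>
    rw [multiSplit, List.mem_append] at hP
    rcases hP with hP | hP
    · exact (ih₁ hP).trans (numLevels_split_le _ _).1
    · exact (ih₂ hP).trans (numLevels_split_le _ _).2

lemma interlace_inorder_multiSplit {t : BT} {xs : List ℝ} (h : isBST t)
    (hxs : xs.Pairwise (· < ·)) (hsub : ∀ x ∈ xs, x ∈ nodes t) :
    List.interlace xs ((multiSplit t xs).map inorder) = inorder t := by
  induction t, xs using multiSplit.induct with
  | case1 t => simp [multiSplit]
  | case2 t x₀ xs' ih₁ ih₂ =>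
    set xs := x₀ :: xs'
    set m := (xs.length + 1) / 2
    set p := xs.getD (m - 1) 0
    have hm1 : 1 ≤ m := by simp only [m, xs, List.length_cons]; omega
    have hm : m - 1 < xs.length := by simp only [m, xs, List.length_cons]; omega
    have hdecomp : xs = xs.take (m - 1) ++ p :: xs.drop m := by
      have hdrop : xs.drop m = xs.drop (m - 1 + 1) := by rw [Nat.sub_add_cancel hm1]
      rw [hdrop, show p = xs[m - 1] from List.getD_eq_getElem _ _ hm, List.getElem_cons_drop,
        List.take_append_drop]
    have hsorted := hxs
    rw [hdecomp, List.pairwise_append, List.pairwise_cons] at hsorted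
    obtain ⟨hL, ⟨hpR, hR⟩, hLpR⟩ := hsorted
    have hp : p ∈ nodes t := hsub p (by rw [hdecomp]; simp)
    have ih₁' := ih₁ (isBST_split h p).1 hL fun x hx => (mem_split_fst h).2
      ⟨hsub x (hdecomp ▸ List.mem_append_left _ hx), by simpa using hLpR x hx p List.mem_cons_self⟩
    have ih₂' := ih₂ (isBST_split h p).2 hR fun x hx => (mem_split_snd h).2
      ⟨hsub x (hdecomp ▸ List.mem_append_right _ (List.mem_cons_of_mem _ hx)), hpR x hx⟩
    rw [multiSplit, List.map_append]
    calc List.interlace xs _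
        = List.interlace (xs.take (m - 1) ++ p :: xs.drop m) _ := by rw [← hdecomp]
      _ = inorder (split t p).1 ++ p :: inorder (split t p).2 := by
        rw [List.interlace_append p (by rw [List.length_map, length_multiSplit]), ih₁', ih₂']
      _ = inorder t := by
        rw [(inorder_split h p).1, (inorder_split h p).2, List.filter_lt_append_cons_filter_gt
          (isBST_iff_pairwise_inorder.1 h) (mem_inorder.2 hp)]

lemma length_slots_le (k : ℕ) (t : BT) : (slots k t).length ≤ 2 ^ k := by
  induction k generalizing t with
  | zero => simp [slots]
  | succ k ih =>
    cases t with
    | leaf => simp [slots, Nat.one_le_two_pow]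
    | node l v r =>
      simp only [slots, List.length_append, pow_succ]
      have := ih l
      have := ih r
      omega

lemma numLevels_le_of_mem_slots {k : ℕ} {t ti : BT} (hti : ti ∈ slots k t) :
    numLevels ti ≤ numLevels t - k := by
  induction k generalizing t with
  | zero => simp_all [slots]
  | succ k ih =>
    cases t with
    | leaf => simp_all [slots, numLevels]
    | node l v r =>
      rw [slots, List.mem_append] at hti
      rcases hti with hti | hti
      · have := ih hti
        simp only [numLevels]
        omega
      · have := ih hti
        simp only [numLevels]
        omega

lemma shallowNodes_node {l : BT} {v : ℝ} {r : BT} (h : isBST (.node l v r)) (k : ℕ) :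
    shallowNodes (.node l v r) (k + 1) = insert v (shallowNodes l k ∪ shallowNodes r k) := by
  ext z
  simp only [shallowNodes, Finset.mem_filter, Finset.mem_insert, Finset.mem_union, nodes_node]
  rcases lt_trichotomy z v with hz | rfl | hz
  · have hzr : z ∉ nodes r := fun h' => (h.2.1 z h').not_gt hz
    simp [sig_node_of_lt hz, hz.ne, hzr]
  · simp
  · have hzl : z ∉ nodes l := fun h' => (h.1 z h').not_gt hz
    simp [sig_node_of_gt hz, hz.ne', hzl]

lemma exists_interlace_inorder_slots {t : BT} (h : isBST t) (k : ℕ) :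
    ∃ zs : List ℝ, zs.toFinset = shallowNodes t k ∧ (slots k t).length = zs.length + 1 ∧
      List.interlace zs ((slots k t).map inorder) = inorder t := by
  induction k generalizing t with
  | zero => exact ⟨[], by simp [shallowNodes], by simp [slots], by simp [slots]⟩
  | succ k ih =>
    cases t with
    | leaf => exact ⟨[], by simp [shallowNodes], by simp [slots], by simp [slots]⟩
    | node l v r =>
      obtain ⟨zl, hzl, hl, hil⟩ := ih h.2.2.1
      obtain ⟨zr, hzr, hr, hir⟩ := ih h.2.2.2
      refine ⟨zl ++ v :: zr, ?_, ?_, ?_⟩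
      · rw [shallowNodes_node h, ← hzl, ← hzr]
        ext z
        simp only [List.mem_toFinset, List.mem_append, List.mem_cons, Finset.mem_insert,
          Finset.mem_union]
        tauto
      · simp [slots, hl, hr]
        omega
      · rw [slots, List.map_append, List.interlace_append v (by simpa using hl), hil, hir,
          inorder]

lemma glue_append (t : BT) {A B : List BT} (hA : A.length = size t + 1) :
    glue t (A ++ B) = ((glue t A).1, B) := by
  induction t generalizing A B with
  | leaf =>
    obtain ⟨P, rfl⟩ := List.length_eq_one_iff.1 hA
    rfl
  | node l v r ihl ihr =>
    obtain ⟨A₁, A₂, rfl, h₁, h₂⟩ := List.exists_append_of_length_eq_add (l := A)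
      (m := size l + 1) (n := size r + 1) (by simp only [size] at hA; omega)
    simp only [glue, List.append_assoc, ihl h₁, ihr h₂]

lemma glue_node_append {l : BT} (v : ℝ) (r : BT) {A₁ : List BT} (A₂ : List BT)
    (h₁ : A₁.length = size l + 1) :
    (glue (.node l v r) (A₁ ++ A₂)).1 = .node (glue l A₁).1 v (glue r A₂).1 := by
  simp only [glue, glue_append l h₁]

lemma inorder_glue (t : BT) {ts : List BT} (h : ts.length = size t + 1) :
    inorder (glue t ts).1 = List.interlace (inorder t) (ts.map inorder) := by
  induction t generalizing ts with
  | leaf =>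
    obtain ⟨P, rfl⟩ := List.length_eq_one_iff.1 h
    simp [glue]
  | node l v r ihl ihr =>
    obtain ⟨A₁, A₂, rfl, h₁, h₂⟩ := List.exists_append_of_length_eq_add (l := ts)
      (m := size l + 1) (n := size r + 1) (by simp only [size] at h; omega)
    rw [glue_node_append v r A₂ h₁, inorder, inorder, ihl h₁, ihr h₂, List.map_append,
      List.interlace_append v (by simpa using h₁)]

lemma glue_snd_suffix (t : BT) (ts : List BT) : (glue t ts).2 <:+ ts := by
  induction t generalizing ts with
  | leaf => exact List.tail_suffix ts
  | node l v r ihl ihr => exact (ihr _).trans (ihl ts)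

lemma numLevels_glue_le (t : BT) {ts : List BT} {m : ℕ} (h : ∀ P ∈ ts, numLevels P ≤ m) :
    numLevels (glue t ts).1 ≤ numLevels t + m := by
  induction t generalizing ts with
  | leaf =>
    cases ts with
    | nil => simp [glue, numLevels]
    | cons P ts => simpa [glue, numLevels] using h P List.mem_cons_self
  | node l v r ihl ihr =>
    have hl := ihl h
    have hr := ihr fun P hP => h P ((glue_snd_suffix l ts).subset hP)
    simp only [glue, numLevels]
    omega

lemma exists_subtreeAt_glue_eq (t : BT) {ts : List BT} {z : ℝ} (hb : isBST (glue t ts).1)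
    (hz : z ∈ nodes (glue t ts).1) (hd : numLevels t ≤ (sig (glue t ts).1 z).length) :
    ∃ P ∈ ts, subtreeAt (glue t ts).1 z = subtreeAt P z := by
  induction t generalizing ts with
  | leaf =>
    cases ts with
    | nil => simp [glue] at hz
    | cons P ts => exact ⟨P, List.mem_cons_self, rfl⟩
  | node l v r ihl ihr =>
    simp only [glue] at hb hz hd ⊢
    rcases lt_trichotomy z v with hzv | rfl | hzv
    · rw [sig_node_of_lt hzv, numLevels, List.length_cons] at hd
      rw [subtreeAt_node_of_lt hzv]
      exact ihl hb.2.2.1 (mem_left_of_lt hb hz hzv) (by omega)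
    · simp [numLevels] at hd
    · rw [sig_node_of_gt hzv, numLevels, List.length_cons] at hd
      rw [subtreeAt_node_of_gt hzv]
      obtain ⟨P, hP, hPz⟩ := ihr hb.2.2.2 (mem_right_of_gt hb hz hzv) (by omega)
      exact ⟨P, (glue_snd_suffix l ts).subset hP, hPz⟩

@[simp] lemma length_rankElems (t : BT) (k : ℕ) : (rankElems t k).length = 2 ^ k - 1 := by
  simp [rankElems]

lemma getD_mem_rankElems (t : BT) {k j : ℕ} (hj0 : 0 < j) (hj : j < 2 ^ k) :
    (inorder t).getD (j * size t / 2 ^ k) 0 ∈ rankElems t k := by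
  refine List.mem_map.2 ⟨j - 1, List.mem_range.2 (by omega), ?_⟩
  rw [Nat.sub_add_cancel hj0]

lemma mem_nodes_of_mem_rankElems {t : BT} {k : ℕ} (hpos : 0 < size t) {y : ℝ}
    (hy : y ∈ rankElems t k) : y ∈ nodes t := by
  obtain ⟨j, hj, rfl⟩ := List.mem_map.1 hy
  have hidx : (j + 1) * size t / 2 ^ k < (inorder t).length := by
    rw [length_inorder]
    refine Nat.div_lt_of_lt_mul ?_
    exact Nat.mul_lt_mul_of_pos_right (by simp at hj; omega) hpos
  rw [List.getD_eq_getElem _ _ hidx, ← mem_inorder]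
  exact List.getElem_mem hidx

lemma card_shallowNodes_lt {t : BT} (h : isBST t) (k : ℕ) : (shallowNodes t k).card < 2 ^ k := by
  obtain ⟨zs, hzs, hlen, -⟩ := exists_interlace_inorder_slots h k
  have := length_slots_le k t
  have := List.toFinset_card_le zs
  rw [← hzs]
  omega

lemma exists_interlace_inorder_balParts {t : BT} (h : isBST t) (k : ℕ) (hpos : 0 < size t) :
    ∃ M : List ℝ, M.toFinset = shallowNodes t k ∪ (rankElems t k).toFinset ∧
      (balParts t k).length = M.length + 1 ∧
      List.interlace M ((balParts t k).map inorder) = inorder t := by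
  obtain ⟨zs, hzs, hlen, hint⟩ := exists_interlace_inorder_slots h k
  set xs : BT → List ℝ := fun ti => (inorder ti).filter (· ∈ rankElems t k)
  have hpw := isBST_iff_pairwise_inorder.1 h
  have hslot : ∀ ti ∈ slots k t, isBST ti := fun ti hti => isBST_iff_pairwise_inorder.2
    (hpw.sublist (hint ▸ List.infix_interlace (List.mem_map_of_mem hti)).sublist)
  refine ⟨List.interlace zs ((slots k t).map xs), ?_, ?_, ?_⟩
  · ext y
    simp only [List.mem_toFinset, List.mem_interlace, List.mem_map, Finset.mem_union, ← hzs]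
    constructor
    · rintro (hy | ⟨_, ⟨ti, -, rfl⟩, hy⟩)
      · exact Or.inl hy
      · exact Or.inr (by simpa [xs] using (List.mem_filter.1 hy).2)
    · rintro (hy | hy)
      · exact Or.inl hy
      · have := mem_inorder.2 (mem_nodes_of_mem_rankElems hpos hy)
        rw [← hint, List.mem_interlace] at this
        rcases this with hy' | ⟨_, hL, hyL⟩
        · exact Or.inl hy'
        · obtain ⟨ti, hti, rfl⟩ := List.mem_map.1 hL
          exact Or.inr ⟨xs ti, ⟨ti, hti, rfl⟩, List.mem_filter.2 ⟨hyL, by simpa using hy⟩⟩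
  · rw [List.length_interlace (by simpa using hlen), balParts, List.length_flatMap]
    simp [length_multiSplit, List.sum_map_add, hlen, xs, Function.comp_def]
    omega
  · rw [balParts, List.map_flatMap, List.interlace_interlace_flatMap xs _ hlen
      fun ti _ => by rw [List.length_map, length_multiSplit]]
    rw [← hint]
    congr 1
    refine List.map_congr_left fun ti hti => interlace_inorder_multiSplit (hslot ti hti)
      ((isBST_iff_pairwise_inorder.1 (hslot ti hti)).filter _) fun x hx => ?_
    exact mem_inorder.1 (List.mem_filter.1 hx).1

lemma IsPerfBalBST.numLevels_le {S : Finset ℝ} {t : BT} {m : ℕ} (h : IsPerfBalBST S t)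
    (hs : size t < 2 ^ m) : numLevels t ≤ m := by
  obtain ⟨hb, -, hh⟩ := h
  rcases Nat.eq_zero_or_pos (numLevels t) with h0 | h0
  · omega
  have hsize : size t ≠ 0 := by cases t <;> simp_all [numLevels]
  have := Nat.log_lt_of_lt_pow hsize hs
  rw [height_eq_numLevels_sub_one hb] at hh
  omega

section

variable {t t₀ : BT} {k : ℕ}

lemma interlace_inorder_balParts (h : isBST t) (hpos : 0 < size t)
    (h₀ : IsPerfBalBST (shallowNodes t k ∪ (rankElems t k).toFinset) t₀) :
    (balParts t k).length = size t₀ + 1 ∧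
      List.interlace (inorder t₀) ((balParts t k).map inorder) = inorder t := by
  obtain ⟨M, hM, hlen, hint⟩ := exists_interlace_inorder_balParts h k hpos
  have hMt : inorder t₀ = M := inorder_eq_of_nodes_eq h₀.1
    ((isBST_iff_pairwise_inorder.1 h).sublist (hint ▸ List.sublist_interlace _ _))
    (h₀.2.1.trans hM.symm)
  rw [← length_inorder, hMt]
  exact ⟨hlen, hint⟩

lemma numLevels_le_of_isPerfBalBST (h : isBST t)
    (h₀ : IsPerfBalBST (shallowNodes t k ∪ (rankElems t k).toFinset) t₀) :
    numLevels t₀ ≤ k + 1 := by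
  refine h₀.numLevels_le ?_
  have hZ := card_shallowNodes_lt h k
  have hX := (rankElems t k).toFinset_card_le
  have hZX := Finset.card_union_le (shallowNodes t k) (rankElems t k).toFinset
  rw [size_eq_card h₀.1, h₀.2.1, pow_succ, length_rankElems] at *
  omega

lemma size_mul_le_of_mem_balParts (h : isBST t) (hk : 2 ^ k ≤ size t)
    (h₀ : IsPerfBalBST (shallowNodes t k ∪ (rankElems t k).toFinset) t₀) {P : BT}
    (hP : P ∈ balParts t k) : size P * 2 ^ k ≤ size t := by
  have hint := (interlace_inorder_balParts h ((Nat.two_pow_pos k).trans_le hk) h₀).2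
  have hPt : inorder P ∈ (balParts t k).map inorder := List.mem_map_of_mem hP
  have hnd := (isBST_iff_pairwise_inorder.1 h).nodup
  rw [← hint] at hnd
  rw [← length_inorder, ← length_inorder t]
  refine List.length_mul_le_of_infix 0 (by positivity)
    (hint ▸ List.infix_interlace hPt) fun j hj0 hj hmem => ?_
  refine List.notMem_of_nodup_interlace hnd hPt hmem (mem_inorder.2 ?_)
  rw [h₀.2.1, length_inorder]
  exact Finset.mem_union_right _ (List.mem_toFinset.2 (getD_mem_rankElems t hj0 hj))

end

section

variable {k : ℕ} {tx s : BT}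

lemma IsBalanceResult.inorder_eq (h : isBST tx) (hres : IsBalanceResult k tx s) :
    inorder s = inorder tx := by
  unfold IsBalanceResult at hres
  split_ifs at hres with hsmall
  · exact inorder_eq_of_nodes_eq hres.1 (isBST_iff_pairwise_inorder.1 h)
      (by rw [hres.2.1]; ext; simp)
  · obtain ⟨t₀, h₀, rfl⟩ := hres
    obtain ⟨hlen, hint⟩ :=
      interlace_inorder_balParts h ((Nat.two_pow_pos k).trans_le (not_lt.1 hsmall)) h₀
    rw [inorder_glue t₀ hlen, hint]

lemma IsBalanceResult.isBST_of_isBST (h : isBST tx) (hres : IsBalanceResult k tx s) :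
    isBST s := by
  rw [isBST_iff_pairwise_inorder, hres.inorder_eq h]
  exact isBST_iff_pairwise_inorder.1 h

lemma IsBalanceResult.nodes_eq (h : isBST tx) (hres : IsBalanceResult k tx s) :
    nodes s = nodes tx := by
  ext z
  rw [← mem_inorder, hres.inorder_eq h, mem_inorder]

lemma IsBalanceResult.height_le (h : isBST tx) (hres : IsBalanceResult k tx s) :
    height s ≤ height tx + 1 := by
  have hs := hres.isBST_of_isBST h
  have hsize : size s = size tx := by rw [← length_inorder, hres.inorder_eq h, length_inorder]
  unfold IsBalanceResult at hres
  split_ifs at hres with hsmall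
  · have := log_size_le_height h
    rw [hres.2.2, hsize]
    omega
  · obtain ⟨t₀, h₀, rfl⟩ := hres
    have hparts : ∀ P ∈ balParts tx k, numLevels P ≤ numLevels tx - k := fun P hP => by
      obtain ⟨ti, hti, hP⟩ := List.mem_flatMap.1 hP
      exact (numLevels_le_of_mem_multiSplit hP).trans (numLevels_le_of_mem_slots hti)
    have hglue := numLevels_glue_le t₀ hparts
    have ht₀ := numLevels_le_of_isPerfBalBST h h₀
    have hk : k < numLevels tx := (Nat.pow_lt_pow_iff_right (by norm_num)).1
      ((not_lt.1 hsmall).trans_lt (size_lt_two_pow_numLevels tx))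
    rw [height_eq_numLevels_sub_one hs, height_eq_numLevels_sub_one h]
    omega

lemma IsBalanceResult.size_subtreeAt_mul_le (h : isBST tx) (hres : IsBalanceResult k tx s)
    {z : ℝ} (hz : z ∈ nodes s) (hd : (sig s z).length = k + 1) :
    size (subtreeAt s z) * 2 ^ k ≤ size tx := by
  have hs := hres.isBST_of_isBST h
  have hdepth := sig_length_lt_numLevels hs hz
  unfold IsBalanceResult at hres
  split_ifs at hres with hsmall
  · have hsize : size s = size tx := by rw [size_eq_card hs, size_eq_card h, hres.2.1]
    have := hres.numLevels_le (hsize ▸ hsmall)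
    omega
  · obtain ⟨t₀, h₀, rfl⟩ := hres
    obtain ⟨P, hP, hPz⟩ := exists_subtreeAt_glue_eq t₀ hs hz
      (hd ▸ numLevels_le_of_isPerfBalBST h h₀)
    rw [hPz]
    exact (Nat.mul_le_mul_right _ (size_subtreeAt_le P z)).trans
      (size_mul_le_of_mem_balParts h (not_lt.1 hsmall) h₀ hP)

end

end BT

theorem balance_properties_general (t : BT) (ht : t.isBST) (x : ℝ) (hx : x ∈ t.nodes)
    (k : ℕ) (t' : BT) (hbal : BT.BalanceRel t x k t') :
    t'.height ≤ t.height + 1 ∧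
    ∀ z ∈ t'.nodes, t'.sig x <+: t'.sig z →
      (t'.sig z).length = (t.sig x).length + k + 1 →
      (t'.subtreeAt z).size * 2 ^ k ≤ (t.subtreeAt x).size := by
  obtain ⟨s, hres, rfl⟩ := hbal
  have htx := BT.isBST_subtreeAt ht x
  have hns := hres.nodes_eq htx
  refine ⟨BT.height_replaceAt_le ht hx hns (hres.height_le htx), fun z hz hp hd => ?_⟩
  have hzs := BT.mem_of_sig_replaceAt_prefix ht hx hns hz hp
  obtain ⟨hsig, hsub⟩ := BT.sig_replaceAt_of_mem ht hns hzs
  rw [hsig, List.length_append] at hd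
  rw [hsub]
  exact hres.size_subtreeAt_mul_le htx hzs (by omega)

/-- properties of `Balance(x, k)`: if `t'` is obtained from `t` by
applying `Balance(x, k)`, then (1) `h(T') ≤ h(T) + 1`, and (2) every `T'`-descendant `z`
of `x` at depth `d_T(x) + k + 1` in `T'` roots a subtree of `T'` of size at most
`|T_x| / 2^k`. -/
theorem balance_properties (t : BT) (ht : t.isBST) (x : ℝ) (hx : x ∈ t.nodes)
    (k : ℕ) (hk : 1 ≤ k) (t' : BT) (hbal : BT.BalanceRel t x k t') :
    t'.height ≤ t.height + 1 ∧
    ∀ z ∈ t'.nodes, t'.sig x <+: t'.sig z →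
      (t'.sig z).length = (t.sig x).length + k + 1 →
      (t'.subtreeAt z).size * 2 ^ k ≤ (t.subtreeAt x).size :=
  balance_properties_general t ht x hx k t' hbal
end
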